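/- arXiv:1606.05530 — 2 statements merged into one kernel-verified Lean document; each statement's English description precedes it below -/
import Mathlib

section
/- Two distinct lines of PG(3,q) meet in a point if and only if their images under the Klein correspondence are collinear on the quadric, i.e., the bilinear form associated to the quadratic form p01*p23 - p02*p13 + p03*p12 vanishes on the pair of Plücker coordinate vectors. -/
/-- The Plücker coordinates of the pair (u,v): pij = u_i v_j - u_j v_i, 0 ≤ i < j ≤ 3. -/
def plucker {F : Type*} [Field F] (u v : Fin 4 → F) : Fin 6 → F :=
  ![u 0 * v 1 - u 1 * v 0, u 0 * v 2 - u 2 * v 0, u 0 * v 3 - u 3 * v 0,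
    u 1 * v 2 - u 2 * v 1, u 1 * v 3 - u 3 * v 1, u 2 * v 3 - u 3 * v 2]

/-- The quadratic form Q(p) = p01*p23 - p02*p13 + p03*p12 of the Klein quadric. -/
def kleinForm {F : Type*} [Field F] (p : Fin 6 → F) : F :=
  p 0 * p 5 - p 1 * p 4 + p 2 * p 3

/-- The associated bilinear form B(p,p') = Q(p+p') - Q(p) - Q(p'). -/
def kleinBilin {F : Type*} [Field F] (p p' : Fin 6 → F) : F :=
  kleinForm (p + p') - kleinForm p - kleinForm p'

lemma cons_val_five' {α : Type*} (a b c d e f : α) : (![a,b,c,d,e,f] : Fin 6 → α) 5 = f := rfl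
lemma fs2' : (Fin.succ 2 : Fin 4) = 3 := rfl
lemma fcs2' : (Fin.castSucc 2 : Fin 4) = 2 := rfl
lemma fsa22' : Fin.succAbove (2 : Fin 4) (2 : Fin 3) = 3 := by decide
lemma fsa12' : Fin.succAbove (1 : Fin 4) (2 : Fin 3) = 3 := by decide

lemma fsa32' : Fin.succAbove (3 : Fin 4) (2 : Fin 3) = 2 := by decide

lemma klein_eq_det {F : Type*} [Field F] (u₁ v₁ u₂ v₂ : Fin 4 → F) :
    kleinBilin (plucker u₁ v₁) (plucker u₂ v₂) =
      (Matrix.of ![u₁, v₁, u₂, v₂]).det := by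
  simp [kleinBilin, kleinForm, plucker, Matrix.det_succ_row_zero, Fin.sum_univ_succ,
    Matrix.cons_val_succ, cons_val_five', fs2', fcs2', fsa22', fsa12', fsa32']
  ring

lemma span_rows_eq {F : Type*} [Field F] (u₁ v₁ u₂ v₂ : Fin 4 → F) :
    Submodule.span F (Set.range (Matrix.of ![u₁, v₁, u₂, v₂])) =
      Submodule.span F {u₁, v₁} ⊔ Submodule.span F {u₂, v₂} := by
  rw [← Submodule.span_union]
  congr 1
  show Set.range ![u₁, v₁, u₂, v₂] = _
  simp [Matrix.range_cons, Matrix.range_empty, Set.union_assoc]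
  ext x
  simp
  tauto

/-- Two distinct lines of PG(3,q) meet in a point (their intersection as
subspaces is nonzero) if and only if the bilinear form associated to the Klein quadratic
form vanishes on the pair of Plücker coordinate vectors of the two lines. -/
theorem stmt_2 (F : Type*) [Field F]
    (W₁ W₂ : Submodule F (Fin 4 → F))
    (hW₁ : Module.finrank F W₁ = 2) (hW₂ : Module.finrank F W₂ = 2) (hne : W₁ ≠ W₂)
    (u₁ v₁ u₂ v₂ : Fin 4 → F)
    (hu₁ : u₁ ∈ W₁) (hv₁ : v₁ ∈ W₁) (h₁ : Submodule.span F {u₁, v₁} = W₁)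
    (hu₂ : u₂ ∈ W₂) (hv₂ : v₂ ∈ W₂) (h₂ : Submodule.span F {u₂, v₂} = W₂) :
    W₁ ⊓ W₂ ≠ ⊥ ↔ kleinBilin (plucker u₁ v₁) (plucker u₂ v₂) = 0 := by
  have hV : Module.finrank F (Fin 4 → F) = 4 := by simp
  have hsum : Module.finrank F ↥(W₁ ⊔ W₂) + Module.finrank F ↥(W₁ ⊓ W₂) = 4 := by
    rw [Submodule.finrank_sup_add_finrank_inf_eq, hW₁, hW₂]
  have hspan : Submodule.span F (Set.range (Matrix.of ![u₁, v₁, u₂, v₂])) = W₁ ⊔ W₂ := by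
    rw [span_rows_eq, h₁, h₂]
  have htop : W₁ ⊔ W₂ = ⊤ ↔ (Matrix.of ![u₁, v₁, u₂, v₂]).det ≠ 0 := by
    rw [← hspan]
    change Submodule.span F (Set.range (Matrix.row (Matrix.of ![u₁, v₁, u₂, v₂]))) = ⊤ ↔ _
    rw [← range_vecMulLinear, LinearMap.range_eq_top, Matrix.coe_vecMulLinear,
      Matrix.vecMul_surjective_iff_isUnit, Matrix.isUnit_iff_isUnit_det, isUnit_iff_ne_zero]
  rw [klein_eq_det]
  constructor
  · intro h
    by_contra hdet
    have hsup : W₁ ⊔ W₂ = ⊤ := htop.mpr hdet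
    have h4 : Module.finrank F ↥(W₁ ⊔ W₂) = 4 := by rw [hsup, finrank_top, hV]
    have h0 : Module.finrank F ↥(W₁ ⊓ W₂) = 0 := by omega
    exact h (Submodule.finrank_eq_zero.mp h0)
  · intro h0
    intro hbot
    have h0' : Module.finrank F ↥(W₁ ⊓ W₂) = 0 := by rw [hbot]; simp
    have h4 : Module.finrank F ↥(W₁ ⊔ W₂) = 4 := by omega
    have hsup : W₁ ⊔ W₂ = ⊤ := Submodule.eq_top_of_finrank_eq (by rw [h4, hV])
    exact htop.mp hsup h0
end

section
/- The generalised quadrangle T_2(O) of Tits, constructed from a conic O in a hyperplane PG(2,q) of PG(3,q), is a generalised quadrangle of order (q,q): it has (q+1)(q^2+1) points and (q+1)(q^2+1) lines, each line has q+1 points, each point is on q+1 lines, and for every point P not on a line l there is a unique point of l collinear with P. -/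
open Module Submodule

section helpers
variable {α : Type*}

lemma card_or_disjoint [Finite α] (A B : α → Prop) (h : ∀ x, A x → B x → False) :
    Nat.card {x // A x ∨ B x} = Nat.card {x // A x} + Nat.card {x // B x} := by
  classical
  rw [← Nat.card_sum]
  refine Nat.card_congr ⟨fun x => if hx : A x.1 then .inl ⟨x.1, hx⟩ else .inr ⟨x.1, x.2.resolve_left hx⟩,
    fun y => y.elim (fun a => ⟨a.1, .inl a.2⟩) (fun b => ⟨b.1, .inr b.2⟩), ?_, ?_⟩
  · rintro ⟨x, hx⟩
    by_cases h1 : A x <;> simp [h1]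
  · rintro (⟨a, ha⟩ | ⟨b, hb⟩)
    · simp [ha]
    · have : ¬ A b := fun h1 => h b h1 hb
      simp [this]

lemma card_and_split [Finite α] (Q B : α → Prop) :
    Nat.card {x // Q x} = Nat.card {x // Q x ∧ B x} + Nat.card {x // Q x ∧ ¬ B x} := by
  rw [← card_or_disjoint (fun x => Q x ∧ B x) (fun x => Q x ∧ ¬ B x) (by tauto)]
  exact Nat.card_congr (Equiv.subtypeEquivRight (by tauto))

lemma card_eq_singleton (a : α) : Nat.card {x // x = a} = 1 := by
  have : Unique {x // x = a} := ⟨⟨⟨a, rfl⟩⟩, by rintro ⟨_, rfl⟩; rfl⟩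
  exact Nat.card_unique

lemma card_sigma_const {ι : Type*} [Finite ι] (f : ι → Type*) [∀ i, Finite (f i)] (c : ℕ)
    (h : ∀ i, Nat.card (f i) = c) : Nat.card (Σ i, f i) = Nat.card ι * c := by
  cases nonempty_fintype ι
  letI : ∀ i, Fintype (f i) := fun i => Fintype.ofFinite _
  rw [Nat.card_eq_fintype_card, Fintype.card_sigma, Nat.card_eq_fintype_card, Fintype.card]
  rw [Finset.sum_congr rfl (fun i _ => by rw [← Nat.card_eq_fintype_card, h i]), Finset.sum_const,
    smul_eq_mul, Finset.card_univ, Fintype.card]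

lemma existsUnique_subtype {p : α → Prop} {r : {x // p x} → Prop} (x : α) (hx : p x)
    (hr : r ⟨x, hx⟩) (uniq : ∀ y : {x // p x}, r y → y.1 = x) : ∃! y : {x // p x}, r y :=
  ⟨⟨x, hx⟩, hr, fun y hy => Subtype.ext (uniq y hy)⟩

end helpers

set_option linter.unusedSectionVars false


section count
variable {F : Type*} [Field F] [Fintype F] {M : Type*} [AddCommGroup M] [Module F M]
  [FiniteDimensional F M]

lemma finite_submodule : Finite (Submodule F M) := by
  haveI : Finite M := Module.finite_of_finite F
  exact Finite.of_injective (fun p => (p : Set M)) SetLike.coe_injective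

lemma rank_one_eq_span {W : Submodule F M} (hW : finrank F W = 1) {v : M} (hv : v ∈ W)
    (hv0 : v ≠ 0) : W = F ∙ v :=
  (Submodule.eq_of_le_of_finrank_le ((Submodule.span_singleton_le_iff_mem v W).2 hv)
    (by rw [hW, finrank_span_singleton hv0])).symm

lemma rank_one_le_iff {W : Submodule F M} (hW : finrank F W = 1) {v : M} (hv : v ∈ W)
    (hv0 : v ≠ 0) {U : Submodule F M} : W ≤ U ↔ v ∈ U := by
  constructor
  · exact fun h => h hv
  · intro h
    rw [rank_one_eq_span hW hv hv0]
    exact (Submodule.span_singleton_le_iff_mem v U).2 h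

-- core count
lemma card_rank_one_mul :
    Nat.card {W : Submodule F M // finrank F W = 1} * (Fintype.card F - 1) + 1 =
      Fintype.card F ^ finrank F M := by
  classical
  haveI : Finite M := Module.finite_of_finite F
  haveI := finite_submodule (F := F) (M := M)
  have key : Nat.card {v : M // v ≠ 0} =
      Nat.card {W : Submodule F M // finrank F W = 1} * (Fintype.card F - 1) := by
    have e : {v : M // v ≠ 0} ≃
        Σ W : {W : Submodule F M // finrank F W = 1}, {v : M // v ∈ W.1 ∧ v ≠ 0} := by
      refine ⟨fun v => ⟨⟨F ∙ v.1, finrank_span_singleton v.2⟩,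
        ⟨v.1, Submodule.mem_span_singleton_self _, v.2⟩⟩,
        fun x => ⟨x.2.1, x.2.2.2⟩, fun v => rfl, ?_⟩
      rintro ⟨⟨W, hW⟩, ⟨v, hv, hv0⟩⟩
      have : W = F ∙ v := rank_one_eq_span hW hv hv0
      subst this
      rfl
    rw [Nat.card_congr e]
    rw [card_sigma_const _ (Fintype.card F - 1)]
    rintro ⟨W, hW⟩
    have e2 : {v : M // v ∈ W ∧ v ≠ 0} ≃ {x : W // x ≠ 0} :=
      ⟨fun v => ⟨⟨v.1, v.2.1⟩, fun h => v.2.2 (congrArg Subtype.val h)⟩,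
       fun x => ⟨x.1.1, x.1.2, fun h => x.2 (Subtype.ext h)⟩,
       fun v => rfl, fun x => rfl⟩
    rw [Nat.card_congr e2]
    haveI : Fintype W := Fintype.ofFinite W
    have hcW : Nat.card W = Fintype.card F ^ finrank F W := by
      rw [Nat.card_eq_fintype_card, card_eq_pow_finrank (K := F)]
    have := card_and_split (α := W) (fun _ => True) (fun x => x = 0)
    simp only [true_and] at this
    have h1 : Nat.card {x : W // x = 0} = 1 := card_eq_singleton 0
    have h2 : Nat.card {x : W // True} = Nat.card W :=
      Nat.card_congr (Equiv.subtypeUnivEquiv (fun _ => trivial))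
    rw [h1, h2, hcW, hW, pow_one] at this
    have hq : 2 ≤ Fintype.card F := Fintype.one_lt_card
    simp only [ne_eq]
    omega
  have : Nat.card {v : M // v ≠ 0} + 1 = Fintype.card F ^ finrank F M := by
    haveI : Fintype M := Fintype.ofFinite M
    have := card_and_split (α := M) (fun _ => True) (fun x => x = 0)
    simp only [true_and] at this
    rw [card_eq_singleton 0, Nat.card_congr (Equiv.subtypeUnivEquiv (fun _ : M => trivial))] at this
    rw [Nat.card_eq_fintype_card, card_eq_pow_finrank (K := F)] at this
    have e : {x : M // ¬ x = 0} ≃ {x : M // x ≠ 0} := Equiv.subtypeEquivRight (fun _ => Iff.rfl)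
    rw [Nat.card_congr e] at this
    omega
  omega

end count

section count2
variable {F : Type*} [Field F] [Fintype F] {M : Type*} [AddCommGroup M] [Module F M]
  [FiniteDimensional F M]

lemma finrank_eq_map_mkQ_add {P l : Submodule F M} (h : P ≤ l) :
    finrank F l = finrank F (l.map P.mkQ) + finrank F P := by
  have hr := LinearMap.finrank_range_add_finrank_ker (P.mkQ.comp l.subtype)
  rw [LinearMap.range_comp, Submodule.range_subtype, LinearMap.ker_comp, Submodule.ker_mkQ] at hr
  rw [← hr, LinearEquiv.finrank_eq (Submodule.comapSubtypeEquivOfLe h)]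

/-- Submodules of rank one more than `P`, containing `P`, are in bijection with rank-one
submodules of the quotient. -/
noncomputable def equivQuotRankOne (P : Submodule F M) :
    {l : Submodule F M // finrank F l = finrank F P + 1 ∧ P ≤ l} ≃
      {W : Submodule F (M ⧸ P) // finrank F W = 1} where
  toFun l := ⟨l.1.map P.mkQ, by
    have := finrank_eq_map_mkQ_add l.2.2
    have hl := l.2.1
    omega⟩
  invFun W := ⟨W.1.comap P.mkQ, by
    have hle : P ≤ W.1.comap P.mkQ := fun x hx => by
      have hx0 : P.mkQ x = 0 := (Submodule.Quotient.mk_eq_zero P).2 hx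
      simp [Submodule.mem_comap, hx0]
    have h2 : (W.1.comap P.mkQ).map P.mkQ = W.1 := by
      rw [Submodule.map_comap_eq, Submodule.range_mkQ, top_inf_eq]
    constructor
    · have := finrank_eq_map_mkQ_add hle
      rw [h2, W.2] at this
      omega
    · exact hle⟩
  left_inv l := by
    ext1
    simp only
    rw [Submodule.comap_map_eq, Submodule.ker_mkQ, sup_eq_left.2 l.2.2]
  right_inv W := by
    ext1
    simp only
    rw [Submodule.map_comap_eq, Submodule.range_mkQ, top_inf_eq]

lemma comap_subtype_finrank {U P : Submodule F M} (h : P ≤ U) :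
    finrank F (P.comap U.subtype) = finrank F P :=
  LinearEquiv.finrank_eq (Submodule.comapSubtypeEquivOfLe h)

/-- Restriction to an ambient submodule `U`. -/
noncomputable def equivRestrict (U P : Submodule F M) (hPU : P ≤ U) (k : ℕ) :
    {l : Submodule F M // finrank F l = k ∧ P ≤ l ∧ l ≤ U} ≃
      {l' : Submodule F U // finrank F l' = k ∧ P.comap U.subtype ≤ l'} where
  toFun l := ⟨l.1.comap U.subtype, by
    refine ⟨?_, Submodule.comap_mono l.2.2.1⟩
    rw [comap_subtype_finrank l.2.2.2, l.2.1]⟩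
  invFun l' := ⟨l'.1.map U.subtype, by
    refine ⟨?_, ?_, ?_⟩
    · rw [Submodule.finrank_map_subtype_eq, l'.2.1]
    · have := Submodule.map_mono l'.2.2 (f := U.subtype)
      rwa [Submodule.map_comap_subtype, inf_eq_right.2 hPU] at this
    · exact Submodule.map_subtype_le U l'.1⟩
  left_inv l := by
    ext1
    simp only
    rw [Submodule.map_comap_subtype, inf_eq_right.2 l.2.2.2]
  right_inv l' := by
    ext1
    simp only
    rw [Submodule.comap_map_eq, Submodule.ker_subtype, sup_bot_eq]

lemma card_interval_mul (P U : Submodule F M) (hPU : P ≤ U) :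
    Nat.card {l : Submodule F M // finrank F l = finrank F P + 1 ∧ P ≤ l ∧ l ≤ U} *
      (Fintype.card F - 1) + 1 = Fintype.card F ^ (finrank F U - finrank F P) := by
  have h1 := Nat.card_congr (equivRestrict U P hPU (finrank F P + 1))
  have h2 : finrank F (P.comap U.subtype) = finrank F P := comap_subtype_finrank hPU
  have e2 : {l' : Submodule F U // finrank F l' = finrank F P + 1 ∧ P.comap U.subtype ≤ l'} ≃
      {W : Submodule F (U ⧸ P.comap U.subtype) // finrank F W = 1} :=
    (Equiv.subtypeEquivRight (fun l' => by rw [h2])).trans (equivQuotRankOne (P.comap U.subtype))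
  rw [h1, Nat.card_congr e2, card_rank_one_mul]
  congr 1
  have h3 := Submodule.finrank_quotient_add_finrank (P.comap U.subtype)
  rw [h2] at h3
  omega

lemma card_resolve {a c q : ℕ} (hq : 2 ≤ q) (h1 : a * (q - 1) + 1 = q ^ 2)
    (h2 : c * (q - 1) + 1 = q ^ 2) : a = c := by
  have h : a * (q - 1) = c * (q - 1) := by omega
  exact Nat.eq_of_mul_eq_mul_right (by omega) h

end count2

section count3
variable {F : Type*} [Field F] [Fintype F] {M : Type*} [AddCommGroup M] [Module F M]
  [FiniteDimensional F M]

lemma two_le_q : 2 ≤ Fintype.card F := Fintype.one_lt_card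

lemma card_resolve' {a c N : ℕ} (h1 : a * (Fintype.card F - 1) + 1 = N)
    (h2 : c * (Fintype.card F - 1) + 1 = N) : a = c := by
  have hq : 2 ≤ Fintype.card F := two_le_q (F := F)
  have h : a * (Fintype.card F - 1) = c * (Fintype.card F - 1) := by omega
  exact Nat.eq_of_mul_eq_mul_right (by omega) h

lemma count_rank1_in {U : Submodule F M} (hU : finrank F U = 2) :
    Nat.card {W : Submodule F M // finrank F W = 1 ∧ W ≤ U} = Fintype.card F + 1 := by
  have h := card_interval_mul (⊥ : Submodule F M) U bot_le
  rw [finrank_bot, hU] at h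
  have e : {l : Submodule F M // finrank F l = 0 + 1 ∧ ⊥ ≤ l ∧ l ≤ U} ≃
      {W : Submodule F M // finrank F W = 1 ∧ W ≤ U} :=
    Equiv.subtypeEquivRight (fun l => by simp)
  rw [Nat.card_congr e] at h
  refine card_resolve' h ?_
  obtain ⟨r, hr⟩ : ∃ r, Fintype.card F = r + 2 :=
    ⟨Fintype.card F - 2, by have := two_le_q (F := F); omega⟩
  have h1 : Fintype.card F - 1 = r + 1 := by omega
  rw [h1, hr]; ring

lemma count_lines_through {P : Submodule F M} (hM : finrank F M = 4) (hP : finrank F P = 1) :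
    Nat.card {l : Submodule F M // finrank F l = 2 ∧ P ≤ l} =
      Fintype.card F ^ 2 + Fintype.card F + 1 := by
  have h := card_interval_mul P (⊤ : Submodule F M) le_top
  rw [hP, finrank_top, hM] at h
  have e : {l : Submodule F M // finrank F l = 1 + 1 ∧ P ≤ l ∧ l ≤ ⊤} ≃
      {l : Submodule F M // finrank F l = 2 ∧ P ≤ l} :=
    Equiv.subtypeEquivRight (fun l => by simp)
  rw [Nat.card_congr e] at h
  refine card_resolve' h ?_
  obtain ⟨r, hr⟩ : ∃ r, Fintype.card F = r + 2 :=
    ⟨Fintype.card F - 2, by have := two_le_q (F := F); omega⟩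
  have h1 : Fintype.card F - 1 = r + 1 := by omega
  rw [h1, hr]; ring

lemma count_lines_through_in {P U : Submodule F M} (hP : finrank F P = 1)
    (hU : finrank F U = 3) (hPU : P ≤ U) :
    Nat.card {l : Submodule F M // finrank F l = 2 ∧ P ≤ l ∧ l ≤ U} = Fintype.card F + 1 := by
  have h := card_interval_mul P U hPU
  rw [hP, hU] at h
  have e : {l : Submodule F M // finrank F l = 1 + 1 ∧ P ≤ l ∧ l ≤ U} ≃
      {l : Submodule F M // finrank F l = 2 ∧ P ≤ l ∧ l ≤ U} :=
    Equiv.subtypeEquivRight (fun l => by norm_num)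
  rw [Nat.card_congr e] at h
  refine card_resolve' h ?_
  obtain ⟨r, hr⟩ : ∃ r, Fintype.card F = r + 2 :=
    ⟨Fintype.card F - 2, by have := two_le_q (F := F); omega⟩
  have h1 : Fintype.card F - 1 = r + 1 := by omega
  rw [h1, hr]; ring

lemma count_planes_through {t : Submodule F M} (hM : finrank F M = 4) (ht : finrank F t = 2) :
    Nat.card {W : Submodule F M // finrank F W = 3 ∧ t ≤ W} = Fintype.card F + 1 := by
  have h := card_interval_mul t (⊤ : Submodule F M) le_top
  rw [ht, finrank_top, hM] at h
  have e : {l : Submodule F M // finrank F l = 2 + 1 ∧ t ≤ l ∧ l ≤ ⊤} ≃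
      {W : Submodule F M // finrank F W = 3 ∧ t ≤ W} :=
    Equiv.subtypeEquivRight (fun l => by simp)
  rw [Nat.card_congr e] at h
  refine card_resolve' h ?_
  obtain ⟨r, hr⟩ : ∃ r, Fintype.card F = r + 2 :=
    ⟨Fintype.card F - 2, by have := two_le_q (F := F); omega⟩
  have h1 : Fintype.card F - 1 = r + 1 := by omega
  rw [h1, hr]; ring

lemma count_rank1_total (hM : finrank F M = 4) :
    Nat.card {W : Submodule F M // finrank F W = 1} =
      Fintype.card F ^ 3 + Fintype.card F ^ 2 + Fintype.card F + 1 := by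
  have h := card_rank_one_mul (F := F) (M := M)
  rw [hM] at h
  refine card_resolve' h ?_
  obtain ⟨r, hr⟩ : ∃ r, Fintype.card F = r + 2 :=
    ⟨Fintype.card F - 2, by have := two_le_q (F := F); omega⟩
  have h1 : Fintype.card F - 1 = r + 1 := by omega
  rw [h1, hr]; ring

lemma count_rank1_in3 {U : Submodule F M} (hU : finrank F U = 3) :
    Nat.card {W : Submodule F M // finrank F W = 1 ∧ W ≤ U} =
      Fintype.card F ^ 2 + Fintype.card F + 1 := by
  have h := card_interval_mul (⊥ : Submodule F M) U bot_le
  rw [finrank_bot, hU] at h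
  have e : {l : Submodule F M // finrank F l = 0 + 1 ∧ ⊥ ≤ l ∧ l ≤ U} ≃
      {W : Submodule F M // finrank F W = 1 ∧ W ≤ U} :=
    Equiv.subtypeEquivRight (fun l => by simp)
  rw [Nat.card_congr e] at h
  refine card_resolve' h ?_
  obtain ⟨r, hr⟩ : ∃ r, Fintype.card F = r + 2 :=
    ⟨Fintype.card F - 2, by have := two_le_q (F := F); omega⟩
  have h1 : Fintype.card F - 1 = r + 1 := by omega
  rw [h1, hr]; ring

end count3

variable {F : Type*} [Field F]

/-- `l` is a tangent line of the point set `O` inside the plane `H`: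
a line of `H` meeting `O` in exactly one point. -/
def IsTangentLine (O : Set (Submodule F (Fin 4 → F))) (H l : Submodule F (Fin 4 → F)) :
    Prop :=
  Module.finrank F l = 2 ∧ l ≤ H ∧ ∃! P, P ∈ O ∧ P ≤ l

/-- The points of the Tits generalised quadrangle T_2(O): (i) points of PG(3,q) not in the
hyperplane H, (ii) planes not contained in H meeting H in a tangent line of O, (iii) H. -/
def T2Point (O : Set (Submodule F (Fin 4 → F))) (H W : Submodule F (Fin 4 → F)) : Prop :=
  (Module.finrank F W = 1 ∧ ¬ W ≤ H) ∨
  (Module.finrank F W = 3 ∧ W ≠ H ∧ IsTangentLine O H (W ⊓ H)) ∨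
  W = H

/-- The lines of T_2(O): (a) lines of PG(3,q) not in H meeting H in a point of O,
(b) the points of O. -/
def T2Line (O : Set (Submodule F (Fin 4 → F))) (H l : Submodule F (Fin 4 → F)) : Prop :=
  (Module.finrank F l = 2 ∧ ¬ l ≤ H ∧ (l ⊓ H) ∈ O) ∨ l ∈ O

/-- Incidence in T_2(O): symmetrised containment. -/
def T2Inc (W l : Submodule F (Fin 4 → F)) : Prop := W ≤ l ∨ l ≤ W


section geom
variable {F : Type*} [Field F] [Fintype F]

lemma finrank_V : finrank F (Fin 4 → F) = 4 := by simp

lemma finrank_le4 (U : Submodule F (Fin 4 → F)) : finrank F U ≤ 4 := by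
  have := Submodule.finrank_le U
  rwa [finrank_V] at this

lemma dimform (s t : Submodule F (Fin 4 → F)) :
    finrank F ↥(s ⊔ t) + finrank F ↥(s ⊓ t) = finrank F s + finrank F t :=
  Submodule.finrank_sup_add_finrank_inf_eq s t

lemma rank1_inf_eq_bot {W U : Submodule F (Fin 4 → F)} (hW : finrank F W = 1)
    (h : ¬ W ≤ U) : W ⊓ U = ⊥ := by
  by_contra hne
  have h1 : finrank F ↥(W ⊓ U) ≠ 0 := fun h0 => hne (Submodule.finrank_eq_zero.1 h0)
  have h2 : finrank F ↥(W ⊓ U) ≤ 1 := hW ▸ Submodule.finrank_mono inf_le_left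
  have : W ⊓ U = W := Submodule.eq_of_le_of_finrank_le inf_le_left (by omega)
  exact h (this ▸ inf_le_right)

lemma finrank_sup_rank1 {W U : Submodule F (Fin 4 → F)} (hW : finrank F W = 1)
    (h : ¬ W ≤ U) : finrank F ↥(W ⊔ U) = finrank F U + 1 := by
  have := dimform W U
  rw [rank1_inf_eq_bot hW h, finrank_bot, hW] at this
  omega

lemma rank1_le_rank1 {W P : Submodule F (Fin 4 → F)} (hW : finrank F W = 1)
    (hP : finrank F P = 1) (h : W ≤ P) : W = P :=
  Submodule.eq_of_le_of_finrank_le h (by omega)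

lemma sup_H_eq_top {H U : Submodule F (Fin 4 → F)} (hH3 : finrank F H = 3)
    (h : ¬ U ≤ H) : U ⊔ H = ⊤ := by
  by_cases h4 : finrank F ↥(U ⊔ H) ≤ 3
  · exfalso
    have : H = U ⊔ H := Submodule.eq_of_le_of_finrank_le le_sup_right (by omega)
    exact h (le_sup_left.trans this.ge)
  · refine Submodule.eq_of_le_of_finrank_le le_top ?_
    rw [finrank_top, finrank_V]
    omega

lemma finrank_inf_H {H U : Submodule F (Fin 4 → F)} (hH3 : finrank F H = 3)
    (h : ¬ U ≤ H) {k : ℕ} (hU : finrank F U = k + 1) : finrank F ↥(U ⊓ H) = k := by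
  have hd := dimform U H
  rw [sup_H_eq_top hH3 h, finrank_top, finrank_V, hH3, hU] at hd
  omega

lemma le_inf_rank_eq {A B : Submodule F (Fin 4 → F)} {k : ℕ} (hA : finrank F A = k)
    (hB : finrank F ↥B = k) (h : A ≤ B) : A = B :=
  Submodule.eq_of_le_of_finrank_le h (by omega)

end geom

lemma card_eq_one_exists {β : Type*} [Finite β] (h : Nat.card β = 1) :
    ∃ x : β, ∀ y : β, y = x := by
  letI := Fintype.ofFinite β
  rw [Nat.card_eq_fintype_card] at h
  exact Fintype.card_eq_one_iff.mp h

section conic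
variable {F : Type*} [Field F] [Fintype F] {H : Submodule F (Fin 4 → F)}
  {O : Set (Submodule F (Fin 4 → F))}

lemma secant_rank (hO : ∀ P ∈ O, finrank F P = 1 ∧ P ≤ H) {P Q : Submodule F (Fin 4 → F)}
    (hP : P ∈ O) (hQ : Q ∈ O) (hne : P ≠ Q) : finrank F ↥(P ⊔ Q) = 2 := by
  have h1 := (hO P hP).1
  have h2 := (hO Q hQ).1
  have hle : ¬ P ≤ Q := fun h => hne (rank1_le_rank1 h1 h2 h)
  rw [finrank_sup_rank1 h1 hle, h2]

lemma secant_eq (hO : ∀ P ∈ O, finrank F P = 1 ∧ P ≤ H) {P Q m : Submodule F (Fin 4 → F)}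
    (hm : finrank F m = 2) (hP : P ∈ O) (hQ : Q ∈ O) (hne : P ≠ Q) (h1 : P ≤ m)
    (h2 : Q ≤ m) : m = P ⊔ Q :=
  (le_inf_rank_eq (secant_rank hO hP hQ hne) hm (sup_le h1 h2)).symm

lemma meets_le_two (hO : ∀ P ∈ O, finrank F P = 1 ∧ P ≤ H)
    (hOarc : ∀ P₁ ∈ O, ∀ P₂ ∈ O, ∀ P₃ ∈ O, P₁ ≠ P₂ → P₁ ≠ P₃ → P₂ ≠ P₃ → ¬ P₃ ≤ P₁ ⊔ P₂)
    {P Q R m : Submodule F (Fin 4 → F)} (hm : finrank F m = 2) (hP : P ∈ O) (hQ : Q ∈ O)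
    (hR : R ∈ O) (hPQ : P ≠ Q) (hPR : P ≠ R) (hQR : Q ≠ R) (h1 : P ≤ m) (h2 : Q ≤ m)
    (h3 : R ≤ m) : False := by
  have := secant_eq hO hm hP hQ hPQ h1 h2
  exact hOarc P hP Q hQ R hR hPQ hPR hQR (this ▸ h3)

lemma card_O_sub (hOcard : Nat.card O = Fintype.card F + 1) {P : Submodule F (Fin 4 → F)}
    (hP : P ∈ O) :
    Nat.card {Q : Submodule F (Fin 4 → F) // Q ∈ O ∧ Q ≠ P} = Fintype.card F := by
  haveI := finite_submodule (F := F) (M := Fin 4 → F)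
  have h := card_and_split (fun Q : Submodule F (Fin 4 → F) => Q ∈ O) (fun Q => Q = P)
  have h1 : Nat.card {Q : Submodule F (Fin 4 → F) // Q ∈ O ∧ Q = P} = 1 := by
    rw [Nat.card_congr (Equiv.subtypeEquivRight (q := fun Q => Q = P)
      (fun Q => ⟨fun h => h.2, fun h => ⟨h ▸ hP, h⟩⟩))]
    exact card_eq_singleton P
  have h2 : Nat.card {Q : Submodule F (Fin 4 → F) // Q ∈ O} = Fintype.card F + 1 := hOcard
  have e : {Q : Submodule F (Fin 4 → F) // Q ∈ O ∧ ¬ Q = P} ≃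
      {Q : Submodule F (Fin 4 → F) // Q ∈ O ∧ Q ≠ P} :=
    Equiv.subtypeEquivRight (fun Q => Iff.rfl)
  rw [← Nat.card_congr e]
  omega

lemma tangent_exists_unique (hH3 : finrank F H = 3)
    (hO : ∀ P ∈ O, finrank F P = 1 ∧ P ≤ H)
    (hOcard : Nat.card O = Fintype.card F + 1)
    (hOarc : ∀ P₁ ∈ O, ∀ P₂ ∈ O, ∀ P₃ ∈ O, P₁ ≠ P₂ → P₁ ≠ P₃ → P₂ ≠ P₃ → ¬ P₃ ≤ P₁ ⊔ P₂)
    {P : Submodule F (Fin 4 → F)} (hP : P ∈ O) :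
    ∃! t : Submodule F (Fin 4 → F), IsTangentLine O H t ∧ P ≤ t := by
  classical
  haveI := finite_submodule (F := F) (M := Fin 4 → F)
  obtain ⟨hP1, hPH⟩ := hO P hP
  -- lines through P in H
  have hS : Nat.card {m : Submodule F (Fin 4 → F) // finrank F m = 2 ∧ P ≤ m ∧ m ≤ H} =
      Fintype.card F + 1 := count_lines_through_in hP1 hH3 hPH
  set S : Submodule F (Fin 4 → F) → Prop := fun m => finrank F m = 2 ∧ P ≤ m ∧ m ≤ H with hSdef
  set B : Submodule F (Fin 4 → F) → Prop := fun m => ∃ Q, Q ∈ O ∧ Q ≠ P ∧ Q ≤ m with hBdef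
  have hsplit := card_and_split S B
  -- secant lines are in bijection with O \ {P}
  have hsec : Nat.card {m : Submodule F (Fin 4 → F) // S m ∧ B m} = Fintype.card F := by
    rw [← card_O_sub hOcard hP]
    refine (Nat.card_congr (Equiv.ofBijective
      (fun Q => (⟨P ⊔ Q.1, ?_, ?_⟩ : {m : Submodule F (Fin 4 → F) // S m ∧ B m})) ⟨?_, ?_⟩)).symm
    · exact ⟨secant_rank hO hP Q.2.1 (Ne.symm Q.2.2), le_sup_left,
        sup_le hPH (hO Q.1 Q.2.1).2⟩
    · exact ⟨Q.1, Q.2.1, Q.2.2, le_sup_right⟩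
    · rintro ⟨Q, hQ, hQP⟩ ⟨Q', hQ', hQP'⟩ hEq
      simp only [Subtype.mk.injEq] at hEq ⊢
      by_contra hne
      exact hOarc P hP Q hQ Q' hQ' (Ne.symm hQP) (Ne.symm hQP') hne (hEq ▸ le_sup_right)
    · rintro ⟨m, ⟨hm2, hPm, hmH⟩, ⟨Q, hQ, hQP, hQm⟩⟩
      exact ⟨⟨Q, hQ, hQP⟩, Subtype.ext (secant_eq hO hm2 hP hQ (Ne.symm hQP) hPm hQm).symm⟩
  have htan1 : Nat.card {m : Submodule F (Fin 4 → F) // S m ∧ ¬ B m} = 1 := by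
    have hS' : Nat.card {m : Submodule F (Fin 4 → F) // S m} = Fintype.card F + 1 := by
      rw [← hS]
    omega
  obtain ⟨⟨t, ⟨ht2, hPt, htH⟩, htB⟩, huniq⟩ := card_eq_one_exists htan1
  have httan : IsTangentLine O H t ∧ P ≤ t := by
    refine ⟨⟨ht2, htH, P, ⟨hP, hPt⟩, ?_⟩, hPt⟩
    rintro Q ⟨hQ, hQt⟩
    by_contra hne
    exact htB ⟨Q, hQ, hne, hQt⟩
  refine ⟨t, httan, ?_⟩
  rintro t' ⟨⟨ht2', htH', Pt', hPt'mem, hPt'uniq⟩, hPt'⟩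
  have ht'B : ¬ B t' := by
    rintro ⟨Q, hQ, hQP, hQt'⟩
    exact hQP ((hPt'uniq Q ⟨hQ, hQt'⟩).trans (hPt'uniq P ⟨hP, hPt'⟩).symm)
  exact congrArg Subtype.val (huniq ⟨t', ⟨ht2', hPt', htH'⟩, ht'B⟩)

lemma tangent_point_eq {t P Q : Submodule F (Fin 4 → F)} (ht : IsTangentLine O H t)
    (hP : P ∈ O) (hQ : Q ∈ O) (hPt : P ≤ t) (hQt : Q ≤ t) : P = Q := by
  obtain ⟨-, -, R, -, hu⟩ := ht
  exact (hu P ⟨hP, hPt⟩).trans (hu Q ⟨hQ, hQt⟩).symm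

end conic

section chars
variable {F : Type*} [Field F] [Fintype F] {H : Submodule F (Fin 4 → F)}
  {O : Set (Submodule F (Fin 4 → F))}

lemma not_le_rank {a b : ℕ} {A B : Submodule F (Fin 4 → F)} (hA : finrank F A = a)
    (hB : finrank F B = b) (h : b < a) : ¬ A ≤ B := fun hle => by
  have := Submodule.finrank_mono hle
  omega

lemma plane_not_le_H (hH3 : finrank F H = 3) {σ : Submodule F (Fin 4 → F)}
    (hσ3 : finrank F σ = 3) (hσH : σ ≠ H) : ¬ σ ≤ H :=
  fun hle => hσH (le_inf_rank_eq hσ3 hH3 hle)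

lemma plane_trace (hH3 : finrank F H = 3) {σ t : Submodule F (Fin 4 → F)}
    (hσ3 : finrank F σ = 3) (hσH : σ ≠ H) (ht2 : finrank F t = 2) (htH : t ≤ H)
    (htσ : t ≤ σ) : σ ⊓ H = t :=
  (le_inf_rank_eq ht2 (finrank_inf_H hH3 (plane_not_le_H hH3 hσ3 hσH) (k := 2) hσ3)
    (le_inf htσ htH)).symm

/-- The plane `l ⊔ t` spanned by a type (a) line and the tangent at its trace point. -/
lemma lineA_plane (hH3 : finrank F H = 3) (hO : ∀ P ∈ O, finrank F P = 1 ∧ P ≤ H)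
    {l t : Submodule F (Fin 4 → F)} (hl2 : finrank F l = 2) (hlH : ¬ l ≤ H)
    (hlO : l ⊓ H ∈ O) (ht : IsTangentLine O H t) (hPt : l ⊓ H ≤ t) :
    finrank F ↥(l ⊔ t) = 3 ∧ l ⊔ t ≠ H ∧ (l ⊔ t) ⊓ H = t ∧ T2Point O H (l ⊔ t) := by
  obtain ⟨ht2, htH, hex⟩ := ht
  have hP1 : finrank F ↥(l ⊓ H) = 1 := (hO _ hlO).1
  have hlt : l ⊓ t = l ⊓ H :=
    le_antisymm (le_inf inf_le_left (inf_le_right.trans htH)) (le_inf inf_le_left hPt)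
  have h3 : finrank F ↥(l ⊔ t) = 3 := by
    have hd := dimform l t
    rw [hlt, hP1, hl2, ht2] at hd
    omega
  have hne : l ⊔ t ≠ H := fun h => hlH (le_sup_left.trans h.le)
  have htr : (l ⊔ t) ⊓ H = t := plane_trace hH3 h3 hne ht2 htH le_sup_right
  refine ⟨h3, hne, htr, Or.inr (Or.inl ⟨h3, hne, ?_⟩)⟩
  rw [htr]
  exact ⟨ht2, htH, hex⟩

end chars

section chars2
variable {F : Type*} [Field F] [Fintype F] {H : Submodule F (Fin 4 → F)}
  {O : Set (Submodule F (Fin 4 → F))}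

lemma charA (hH3 : finrank F H = 3) (hO : ∀ P ∈ O, finrank F P = 1 ∧ P ≤ H)
    (hOcard : Nat.card O = Fintype.card F + 1)
    (hOarc : ∀ P₁ ∈ O, ∀ P₂ ∈ O, ∀ P₃ ∈ O, P₁ ≠ P₂ → P₁ ≠ P₃ → P₂ ≠ P₃ → ¬ P₃ ≤ P₁ ⊔ P₂)
    {l t : Submodule F (Fin 4 → F)} (hl2 : finrank F l = 2) (hlH : ¬ l ≤ H)
    (hlO : l ⊓ H ∈ O) (ht : IsTangentLine O H t) (hPt : l ⊓ H ≤ t)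
    (W : Submodule F (Fin 4 → F)) :
    (T2Point O H W ∧ T2Inc W l) ↔
      ((finrank F W = 1 ∧ W ≤ l ∧ ¬ W ≤ H) ∨ W = l ⊔ t) := by
  obtain ⟨h3, hne, htr, hpt⟩ := lineA_plane hH3 hO hl2 hlH hlO ht hPt
  constructor
  · rintro ⟨hpoint, hinc⟩
    rcases hpoint with ⟨hW1, hWH⟩ | ⟨hW3, hWne, htan⟩ | rfl
    · refine Or.inl ⟨hW1, ?_, hWH⟩
      rcases hinc with h | h
      · exact h
      · exact absurd h (not_le_rank hl2 hW1 (by omega))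
    · refine Or.inr ?_
      have hlW : l ≤ W := by
        rcases hinc with h | h
        · exact absurd h (not_le_rank hW3 hl2 (by omega))
        · exact h
      have hPW : l ⊓ H ≤ W ⊓ H := le_inf (inf_le_left.trans hlW) inf_le_right
      have hWt : W ⊓ H = t :=
        (tangent_exists_unique hH3 hO hOcard hOarc hlO).unique ⟨htan, hPW⟩ ⟨ht, hPt⟩
      exact (le_inf_rank_eq h3 hW3 (sup_le hlW (hWt ▸ inf_le_left))).symm
    · rcases hinc with h | h
      · exact absurd h (not_le_rank hH3 hl2 (by omega))
      · exact absurd h hlH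
  · rintro (⟨hW1, hWl, hWH⟩ | rfl)
    · exact ⟨Or.inl ⟨hW1, hWH⟩, Or.inl hWl⟩
    · exact ⟨hpt, Or.inr le_sup_left⟩

lemma charB (hH3 : finrank F H = 3) (hO : ∀ P ∈ O, finrank F P = 1 ∧ P ≤ H)
    (hOcard : Nat.card O = Fintype.card F + 1)
    (hOarc : ∀ P₁ ∈ O, ∀ P₂ ∈ O, ∀ P₃ ∈ O, P₁ ≠ P₂ → P₁ ≠ P₃ → P₂ ≠ P₃ → ¬ P₃ ≤ P₁ ⊔ P₂)
    {P t : Submodule F (Fin 4 → F)} (hP : P ∈ O) (ht : IsTangentLine O H t) (hPt : P ≤ t)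
    (W : Submodule F (Fin 4 → F)) :
    (T2Point O H W ∧ T2Inc W P) ↔ ((finrank F W = 3 ∧ t ≤ W ∧ W ≠ H) ∨ W = H) := by
  obtain ⟨hP1, hPH⟩ := hO P hP
  obtain ⟨ht2, htH, hex⟩ := ht
  constructor
  · rintro ⟨hpoint, hinc⟩
    rcases hpoint with ⟨hW1, hWH⟩ | ⟨hW3, hWne, htan⟩ | rfl
    · exfalso
      rcases hinc with h | h
      · exact hWH ((rank1_le_rank1 hW1 hP1 h) ▸ hPH)
      · exact hWH ((rank1_le_rank1 hP1 hW1 h) ▸ hPH)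
    · refine Or.inl ⟨hW3, ?_, hWne⟩
      have hPW : P ≤ W := by
        rcases hinc with h | h
        · exact absurd h (not_le_rank hW3 hP1 (by omega))
        · exact h
      have hWt : W ⊓ H = t :=
        (tangent_exists_unique hH3 hO hOcard hOarc hP).unique ⟨htan, le_inf hPW hPH⟩
          ⟨⟨ht2, htH, hex⟩, hPt⟩
      exact hWt ▸ inf_le_left
    · exact Or.inr rfl
  · rintro (⟨hW3, htW, hWne⟩ | rfl)
    · refine ⟨Or.inr (Or.inl ⟨hW3, hWne, ?_⟩), Or.inr (hPt.trans htW)⟩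
      rw [plane_trace hH3 hW3 hWne ht2 htH htW]
      exact ⟨ht2, htH, hex⟩
    · exact ⟨Or.inr (Or.inr rfl), Or.inr hPH⟩

lemma charLinesI (hO : ∀ P ∈ O, finrank F P = 1 ∧ P ≤ H) {W : Submodule F (Fin 4 → F)}
    (hW1 : finrank F W = 1) (hWH : ¬ W ≤ H) (l : Submodule F (Fin 4 → F)) :
    (T2Line O H l ∧ T2Inc W l) ↔ (finrank F l = 2 ∧ W ≤ l ∧ l ⊓ H ∈ O) := by
  constructor
  · rintro ⟨hline, hinc⟩
    rcases hline with ⟨hl2, hlH, hlO⟩ | hlO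
    · refine ⟨hl2, ?_, hlO⟩
      rcases hinc with h | h
      · exact h
      · exact absurd h (not_le_rank hl2 hW1 (by omega))
    · exfalso
      obtain ⟨hl1, hlH⟩ := hO l hlO
      rcases hinc with h | h
      · exact hWH ((rank1_le_rank1 hW1 hl1 h) ▸ hlH)
      · exact hWH ((rank1_le_rank1 hl1 hW1 h) ▸ hlH)
  · rintro ⟨hl2, hWl, hlO⟩
    exact ⟨Or.inl ⟨hl2, fun h => hWH (hWl.trans h), hlO⟩, Or.inl hWl⟩

lemma charLinesII (hH3 : finrank F H = 3) (hO : ∀ P ∈ O, finrank F P = 1 ∧ P ≤ H)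
    {σ t P : Submodule F (Fin 4 → F)} (hσ3 : finrank F σ = 3) (hσH : σ ≠ H)
    (htr : σ ⊓ H = t) (ht : IsTangentLine O H t) (hP : P ∈ O) (hPt : P ≤ t)
    (l : Submodule F (Fin 4 → F)) :
    (T2Line O H l ∧ T2Inc σ l) ↔
      ((finrank F l = 2 ∧ P ≤ l ∧ l ≤ σ ∧ ¬ l ≤ H) ∨ l = P) := by
  obtain ⟨hP1, hPH⟩ := hO P hP
  have hOinσ : ∀ Q, Q ∈ O → Q ≤ σ → Q = P := fun Q hQ hQσ =>
    tangent_point_eq ht hQ hP (htr ▸ le_inf hQσ (hO Q hQ).2) hPt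
  constructor
  · rintro ⟨hline, hinc⟩
    rcases hline with ⟨hl2, hlH, hlO⟩ | hlO
    · have hlσ : l ≤ σ := by
        rcases hinc with h | h
        · exact absurd h (not_le_rank hσ3 hl2 (by omega))
        · exact h
      have hlHP : l ⊓ H = P := hOinσ _ hlO (inf_le_left.trans hlσ)
      exact Or.inl ⟨hl2, hlHP ▸ inf_le_left, hlσ, hlH⟩
    · refine Or.inr ?_
      have hl1 := (hO l hlO).1
      rcases hinc with h | h
      · exact absurd h (not_le_rank hσ3 hl1 (by omega))
      · exact hOinσ _ hlO h
  · rintro (⟨hl2, hPl, hlσ, hlH⟩ | rfl)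
    · refine ⟨Or.inl ⟨hl2, hlH, ?_⟩, Or.inr hlσ⟩
      have h1 : finrank F ↥(l ⊓ H) = 1 := finrank_inf_H hH3 hlH (k := 1) hl2
      rw [← rank1_le_rank1 hP1 h1 (le_inf hPl hPH)]
      exact hP
    · exact ⟨Or.inr hP, Or.inr (hPt.trans (htr ▸ inf_le_left))⟩

lemma charLinesH (hH3 : finrank F H = 3) (hO : ∀ P ∈ O, finrank F P = 1 ∧ P ≤ H)
    (l : Submodule F (Fin 4 → F)) : (T2Line O H l ∧ T2Inc H l) ↔ l ∈ O := by
  constructor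
  · rintro ⟨hline, hinc⟩
    rcases hline with ⟨hl2, hlH, hlO⟩ | hlO
    · exfalso
      rcases hinc with h | h
      · exact absurd h (not_le_rank hH3 hl2 (by omega))
      · exact hlH h
    · exact hlO
  · exact fun h => ⟨Or.inr h, Or.inr (hO l h).2⟩

end chars2

section parts
variable {F : Type*} [Field F] [Fintype F] {H : Submodule F (Fin 4 → F)}
  {O : Set (Submodule F (Fin 4 → F))}

lemma card_affine_on_line (hH3 : finrank F H = 3) {l : Submodule F (Fin 4 → F)}
    (hl2 : finrank F l = 2) (hlH : ¬ l ≤ H) {P : Submodule F (Fin 4 → F)}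
    (hP1 : finrank F P = 1) (hPl : l ⊓ H = P) :
    Nat.card {W : Submodule F (Fin 4 → F) // finrank F W = 1 ∧ W ≤ l ∧ ¬ W ≤ H} =
      Fintype.card F := by
  haveI := finite_submodule (F := F) (M := Fin 4 → F)
  have hsplit := card_and_split (fun W : Submodule F (Fin 4 → F) => finrank F W = 1 ∧ W ≤ l)
    (fun W => W ≤ H)
  have htot : Nat.card {W : Submodule F (Fin 4 → F) // finrank F W = 1 ∧ W ≤ l} =
      Fintype.card F + 1 := count_rank1_in hl2
  have hone : Nat.card {W : Submodule F (Fin 4 → F) //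
      (finrank F W = 1 ∧ W ≤ l) ∧ W ≤ H} = 1 := by
    rw [Nat.card_congr (Equiv.subtypeEquivRight (q := fun W => W = P) (fun W => ?_))]
    · exact card_eq_singleton P
    constructor
    · rintro ⟨⟨hW1, hWl⟩, hWH⟩
      exact rank1_le_rank1 hW1 hP1 (hPl ▸ le_inf hWl hWH)
    · rintro rfl
      exact ⟨⟨hP1, hPl ▸ inf_le_left⟩, hPl ▸ inf_le_right⟩
  have e : {W : Submodule F (Fin 4 → F) // (finrank F W = 1 ∧ W ≤ l) ∧ ¬ W ≤ H} ≃
      {W : Submodule F (Fin 4 → F) // finrank F W = 1 ∧ W ≤ l ∧ ¬ W ≤ H} :=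
    Equiv.subtypeEquivRight (fun W => by tauto)
  rw [← Nat.card_congr e]
  omega

lemma card_planes_thru_tangent (hH3 : finrank F H = 3) {t : Submodule F (Fin 4 → F)}
    (ht2 : finrank F t = 2) (htH : t ≤ H) :
    Nat.card {W : Submodule F (Fin 4 → F) // finrank F W = 3 ∧ t ≤ W ∧ W ≠ H} =
      Fintype.card F := by
  haveI := finite_submodule (F := F) (M := Fin 4 → F)
  have hsplit := card_and_split (fun W : Submodule F (Fin 4 → F) => finrank F W = 3 ∧ t ≤ W)
    (fun W => W = H)
  have htot : Nat.card {W : Submodule F (Fin 4 → F) // finrank F W = 3 ∧ t ≤ W} =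
      Fintype.card F + 1 := count_planes_through finrank_V ht2
  have hone : Nat.card {W : Submodule F (Fin 4 → F) //
      (finrank F W = 3 ∧ t ≤ W) ∧ W = H} = 1 := by
    rw [Nat.card_congr (Equiv.subtypeEquivRight (q := fun W => W = H) (fun W => ?_))]
    · exact card_eq_singleton H
    exact ⟨fun h => h.2, fun h => ⟨⟨h ▸ hH3, h ▸ htH⟩, h⟩⟩
  have e : {W : Submodule F (Fin 4 → F) // (finrank F W = 3 ∧ t ≤ W) ∧ ¬ W = H} ≃
      {W : Submodule F (Fin 4 → F) // finrank F W = 3 ∧ t ≤ W ∧ W ≠ H} :=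
    Equiv.subtypeEquivRight (fun W => by tauto)
  rw [← Nat.card_congr e]
  omega

lemma card_lines_affine_thru (hH3 : finrank F H = 3) {P : Submodule F (Fin 4 → F)}
    (hP1 : finrank F P = 1) (hPH : P ≤ H) :
    Nat.card {l : Submodule F (Fin 4 → F) // finrank F l = 2 ∧ P ≤ l ∧ ¬ l ≤ H} =
      Fintype.card F ^ 2 := by
  haveI := finite_submodule (F := F) (M := Fin 4 → F)
  have hsplit := card_and_split (fun l : Submodule F (Fin 4 → F) => finrank F l = 2 ∧ P ≤ l)
    (fun l => l ≤ H)
  have htot : Nat.card {l : Submodule F (Fin 4 → F) // finrank F l = 2 ∧ P ≤ l} =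
      Fintype.card F ^ 2 + Fintype.card F + 1 := count_lines_through finrank_V hP1
  have hinH : Nat.card {l : Submodule F (Fin 4 → F) // (finrank F l = 2 ∧ P ≤ l) ∧ l ≤ H} =
      Fintype.card F + 1 := by
    rw [Nat.card_congr (Equiv.subtypeEquivRight
      (q := fun l : Submodule F (Fin 4 → F) => finrank F l = 2 ∧ P ≤ l ∧ l ≤ H) (fun l => by tauto))]
    exact count_lines_through_in hP1 hH3 hPH
  have e : {l : Submodule F (Fin 4 → F) // (finrank F l = 2 ∧ P ≤ l) ∧ ¬ l ≤ H} ≃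
      {l : Submodule F (Fin 4 → F) // finrank F l = 2 ∧ P ≤ l ∧ ¬ l ≤ H} :=
    Equiv.subtypeEquivRight (fun l => by tauto)
  rw [← Nat.card_congr e]
  omega

lemma card_lines_in_plane_thru (hH3 : finrank F H = 3) {P σ t : Submodule F (Fin 4 → F)}
    (hP1 : finrank F P = 1) (hPH : P ≤ H) (hσ3 : finrank F σ = 3) (hPσ : P ≤ σ)
    (htr : σ ⊓ H = t) (ht2 : finrank F t = 2) (hPt : P ≤ t) :
    Nat.card {l : Submodule F (Fin 4 → F) //
      finrank F l = 2 ∧ P ≤ l ∧ l ≤ σ ∧ ¬ l ≤ H} = Fintype.card F := by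
  haveI := finite_submodule (F := F) (M := Fin 4 → F)
  have hsplit := card_and_split
    (fun l : Submodule F (Fin 4 → F) => finrank F l = 2 ∧ P ≤ l ∧ l ≤ σ) (fun l => l ≤ H)
  have htot : Nat.card {l : Submodule F (Fin 4 → F) // finrank F l = 2 ∧ P ≤ l ∧ l ≤ σ} =
      Fintype.card F + 1 := count_lines_through_in hP1 hσ3 hPσ
  have hone : Nat.card {l : Submodule F (Fin 4 → F) //
      (finrank F l = 2 ∧ P ≤ l ∧ l ≤ σ) ∧ l ≤ H} = 1 := by
    rw [Nat.card_congr (Equiv.subtypeEquivRight (q := fun l => l = t) (fun l => ?_))]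
    · exact card_eq_singleton t
    constructor
    · rintro ⟨⟨hl2, hPl, hlσ⟩, hlH⟩
      exact le_inf_rank_eq hl2 ht2 (htr ▸ le_inf hlσ hlH)
    · rintro rfl
      exact ⟨⟨ht2, hPt, htr ▸ inf_le_left⟩, htr ▸ inf_le_right⟩
  have e : {l : Submodule F (Fin 4 → F) // (finrank F l = 2 ∧ P ≤ l ∧ l ≤ σ) ∧ ¬ l ≤ H} ≃
      {l : Submodule F (Fin 4 → F) // finrank F l = 2 ∧ P ≤ l ∧ l ≤ σ ∧ ¬ l ≤ H} :=
    Equiv.subtypeEquivRight (fun l => by tauto)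
  rw [← Nat.card_congr e]
  omega

lemma card_tangents (hH3 : finrank F H = 3) (hO : ∀ P ∈ O, finrank F P = 1 ∧ P ≤ H)
    (hOcard : Nat.card O = Fintype.card F + 1)
    (hOarc : ∀ P₁ ∈ O, ∀ P₂ ∈ O, ∀ P₃ ∈ O, P₁ ≠ P₂ → P₁ ≠ P₃ → P₂ ≠ P₃ → ¬ P₃ ≤ P₁ ⊔ P₂) :
    Nat.card {t : Submodule F (Fin 4 → F) // IsTangentLine O H t} = Fintype.card F + 1 := by
  classical
  rw [← hOcard]
  refine (Nat.card_congr (Equiv.ofBijective (fun P : ↥O =>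
    (⟨(tangent_exists_unique hH3 hO hOcard hOarc P.2).exists.choose,
      (tangent_exists_unique hH3 hO hOcard hOarc P.2).exists.choose_spec.1⟩ :
      {t : Submodule F (Fin 4 → F) // IsTangentLine O H t})) ⟨?_, ?_⟩)).symm
  · intro P P' hEq
    have h1 := (tangent_exists_unique hH3 hO hOcard hOarc P.2).exists.choose_spec
    have h2 := (tangent_exists_unique hH3 hO hOcard hOarc P'.2).exists.choose_spec
    have := congrArg Subtype.val hEq
    simp only at this
    exact Subtype.ext (tangent_point_eq h1.1 P.2 P'.2 h1.2 (this ▸ h2.2))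
  · rintro ⟨t, ht⟩
    obtain ⟨P, ⟨hPO, hPt⟩, -⟩ := ht.2.2
    refine ⟨⟨P, hPO⟩, Subtype.ext ?_⟩
    have h1 := (tangent_exists_unique hH3 hO hOcard hOarc hPO).exists.choose_spec
    exact (tangent_exists_unique hH3 hO hOcard hOarc hPO).unique h1 ⟨ht, hPt⟩

lemma part1 (hH3 : finrank F H = 3) (hO : ∀ P ∈ O, finrank F P = 1 ∧ P ≤ H)
    (hOcard : Nat.card O = Fintype.card F + 1)
    (hOarc : ∀ P₁ ∈ O, ∀ P₂ ∈ O, ∀ P₃ ∈ O, P₁ ≠ P₂ → P₁ ≠ P₃ → P₂ ≠ P₃ → ¬ P₃ ≤ P₁ ⊔ P₂) :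
    Nat.card {W : Submodule F (Fin 4 → F) // T2Point O H W} =
      (Fintype.card F + 1) * (Fintype.card F ^ 2 + 1) := by
  classical
  haveI := finite_submodule (F := F) (M := Fin 4 → F)
  have hsplit1 : Nat.card {W : Submodule F (Fin 4 → F) // T2Point O H W} =
      Nat.card {W : Submodule F (Fin 4 → F) // finrank F W = 1 ∧ ¬ W ≤ H} +
      Nat.card {W : Submodule F (Fin 4 → F) //
        (finrank F W = 3 ∧ W ≠ H ∧ IsTangentLine O H (W ⊓ H)) ∨ W = H} := by
    rw [← card_or_disjoint (fun W : Submodule F (Fin 4 → F) => finrank F W = 1 ∧ ¬ W ≤ H)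
      (fun W => (finrank F W = 3 ∧ W ≠ H ∧ IsTangentLine O H (W ⊓ H)) ∨ W = H)
      (fun W h1 h2 => by rcases h2 with h2 | rfl <;> omega)]
    exact Nat.card_congr (Equiv.subtypeEquivRight (fun W => Iff.rfl))
  have hsplit2 : Nat.card {W : Submodule F (Fin 4 → F) //
        (finrank F W = 3 ∧ W ≠ H ∧ IsTangentLine O H (W ⊓ H)) ∨ W = H} =
      Nat.card {W : Submodule F (Fin 4 → F) //
        finrank F W = 3 ∧ W ≠ H ∧ IsTangentLine O H (W ⊓ H)} +
      Nat.card {W : Submodule F (Fin 4 → F) // W = H} := by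
    rw [← card_or_disjoint
      (fun W : Submodule F (Fin 4 → F) => finrank F W = 3 ∧ W ≠ H ∧ IsTangentLine O H (W ⊓ H))
      (fun W => W = H) (fun W h1 h2 => h1.2.1 h2)]
  have hA : Nat.card {W : Submodule F (Fin 4 → F) // finrank F W = 1 ∧ ¬ W ≤ H} =
      Fintype.card F ^ 3 := by
    have hsplit := card_and_split (fun W : Submodule F (Fin 4 → F) => finrank F W = 1)
      (fun W => W ≤ H)
    have htot := count_rank1_total (F := F) (M := Fin 4 → F) finrank_V
    have hinH : Nat.card {W : Submodule F (Fin 4 → F) // finrank F W = 1 ∧ W ≤ H} =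
        Fintype.card F ^ 2 + Fintype.card F + 1 := count_rank1_in3 hH3
    omega
  have hC : Nat.card {W : Submodule F (Fin 4 → F) // W = H} = 1 := card_eq_singleton H
  have hB : Nat.card {W : Submodule F (Fin 4 → F) //
      finrank F W = 3 ∧ W ≠ H ∧ IsTangentLine O H (W ⊓ H)} =
      (Fintype.card F + 1) * Fintype.card F := by
    have e : {W : Submodule F (Fin 4 → F) //
        finrank F W = 3 ∧ W ≠ H ∧ IsTangentLine O H (W ⊓ H)} ≃
        Σ t : {t : Submodule F (Fin 4 → F) // IsTangentLine O H t},
          {W : Submodule F (Fin 4 → F) // finrank F W = 3 ∧ t.1 ≤ W ∧ W ≠ H} := by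
      refine ⟨fun W => ⟨⟨W.1 ⊓ H, W.2.2.2⟩, ⟨W.1, W.2.1, inf_le_left, W.2.2.1⟩⟩,
        fun x => ⟨x.2.1, x.2.2.1, x.2.2.2.2, ?_⟩, fun W => Subtype.ext rfl, ?_⟩
      · have h := plane_trace hH3 x.2.2.1 x.2.2.2.2 x.1.2.1 x.1.2.2.1 x.2.2.2.1
        rw [h]
        exact x.1.2
      · rintro ⟨⟨t, ht⟩, ⟨W, hW3, htW, hWne⟩⟩
        have h : W ⊓ H = t := plane_trace hH3 hW3 hWne ht.1 ht.2.1 htW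
        subst h
        rfl
    rw [Nat.card_congr e, card_sigma_const _ (Fintype.card F)
      (fun t => card_planes_thru_tangent hH3 t.2.1 t.2.2.1),
      card_tangents hH3 hO hOcard hOarc]
  have hq2 := two_le_q (F := F)
  rw [hsplit1, hsplit2, hA, hB, hC]
  ring
end parts

section parts2
variable {F : Type*} [Field F] [Fintype F] {H : Submodule F (Fin 4 → F)}
  {O : Set (Submodule F (Fin 4 → F))}

lemma part2 (hH3 : finrank F H = 3) (hO : ∀ P ∈ O, finrank F P = 1 ∧ P ≤ H)
    (hOcard : Nat.card O = Fintype.card F + 1) :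
    Nat.card {l : Submodule F (Fin 4 → F) // T2Line O H l} =
      (Fintype.card F + 1) * (Fintype.card F ^ 2 + 1) := by
  classical
  haveI := finite_submodule (F := F) (M := Fin 4 → F)
  have hkey : ∀ (x : ↥O) (l : Submodule F (Fin 4 → F)), finrank F l = 2 → x.1 ≤ l →
      ¬ l ≤ H → l ⊓ H = x.1 := by
    rintro ⟨P, hP⟩ l hl2 hPl hlH
    exact (rank1_le_rank1 (hO P hP).1 (finrank_inf_H hH3 hlH (k := 1) hl2)
      (le_inf hPl (hO P hP).2)).symm
  have hsplitL : Nat.card {l : Submodule F (Fin 4 → F) // T2Line O H l} =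
      Nat.card {l : Submodule F (Fin 4 → F) // finrank F l = 2 ∧ ¬ l ≤ H ∧ l ⊓ H ∈ O} +
      Nat.card {l : Submodule F (Fin 4 → F) // l ∈ O} := by
    rw [← card_or_disjoint
      (fun l : Submodule F (Fin 4 → F) => finrank F l = 2 ∧ ¬ l ≤ H ∧ l ⊓ H ∈ O)
      (fun l => l ∈ O) (fun l h1 h2 => by have := (hO l h2).1; omega)]
    exact Nat.card_congr (Equiv.subtypeEquivRight (fun l => Iff.rfl))
  have hBO : Nat.card {l : Submodule F (Fin 4 → F) // l ∈ O} = Fintype.card F + 1 := hOcard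
  have hA : Nat.card {l : Submodule F (Fin 4 → F) //
      finrank F l = 2 ∧ ¬ l ≤ H ∧ l ⊓ H ∈ O} = (Fintype.card F + 1) * Fintype.card F ^ 2 := by
    have e : {l : Submodule F (Fin 4 → F) // finrank F l = 2 ∧ ¬ l ≤ H ∧ l ⊓ H ∈ O} ≃
        Σ P : ↥O, {l : Submodule F (Fin 4 → F) // finrank F l = 2 ∧ P.1 ≤ l ∧ ¬ l ≤ H} := by
      refine ⟨fun l => ⟨⟨l.1 ⊓ H, l.2.2.2⟩, ⟨l.1, l.2.1, inf_le_left, l.2.2.1⟩⟩,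
        fun x => ⟨x.2.1, x.2.2.1, x.2.2.2.2, ?_⟩, fun l => Subtype.ext rfl, ?_⟩
      · rw [hkey x.1 x.2.1 x.2.2.1 x.2.2.2.1 x.2.2.2.2]
        exact x.1.2
      · rintro ⟨⟨P, hP⟩, ⟨l, hl2, hPl, hlH⟩⟩
        have h := hkey ⟨P, hP⟩ l hl2 hPl hlH
        subst h
        rfl
    rw [Nat.card_congr e, card_sigma_const _ (Fintype.card F ^ 2)
      (fun P : ↥O => card_lines_affine_thru hH3 (hO P.1 P.2).1 (hO P.1 P.2).2), hOcard]
  rw [hsplitL, hBO, hA]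
  ring

lemma part3 (hH3 : finrank F H = 3) (hO : ∀ P ∈ O, finrank F P = 1 ∧ P ≤ H)
    (hOcard : Nat.card O = Fintype.card F + 1)
    (hOarc : ∀ P₁ ∈ O, ∀ P₂ ∈ O, ∀ P₃ ∈ O, P₁ ≠ P₂ → P₁ ≠ P₃ → P₂ ≠ P₃ → ¬ P₃ ≤ P₁ ⊔ P₂)
    {l : Submodule F (Fin 4 → F)} (hl : T2Line O H l) :
    Nat.card {W : {W : Submodule F (Fin 4 → F) // T2Point O H W} // T2Inc W.1 l} =
      Fintype.card F + 1 := by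
  classical
  haveI := finite_submodule (F := F) (M := Fin 4 → F)
  rw [Nat.card_congr (Equiv.subtypeSubtypeEquivSubtypeInter (T2Point O H) (fun W => T2Inc W l))]
  rcases hl with ⟨hl2, hlH, hlO⟩ | hlO
  · obtain ⟨t, ⟨ht, hPt⟩, -⟩ := tangent_exists_unique hH3 hO hOcard hOarc hlO
    obtain ⟨h3, hne, htr, hpt⟩ := lineA_plane hH3 hO hl2 hlH hlO ht hPt
    rw [Nat.card_congr (Equiv.subtypeEquivRight
      (charA hH3 hO hOcard hOarc hl2 hlH hlO ht hPt))]
    rw [card_or_disjoint _ _ (fun W h1 h2 => by rw [h2] at h1; omega)]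
    rw [card_affine_on_line hH3 hl2 hlH (hO _ hlO).1 rfl, card_eq_singleton]
  · obtain ⟨t, ⟨ht, hPt⟩, -⟩ := tangent_exists_unique hH3 hO hOcard hOarc hlO
    rw [Nat.card_congr (Equiv.subtypeEquivRight (charB hH3 hO hOcard hOarc hlO ht hPt))]
    rw [card_or_disjoint _ _ (fun W h1 h2 => h1.2.2 h2)]
    rw [card_planes_thru_tangent hH3 ht.1 ht.2.1, card_eq_singleton]

lemma part4 (hH3 : finrank F H = 3) (hO : ∀ P ∈ O, finrank F P = 1 ∧ P ≤ H)
    (hOcard : Nat.card O = Fintype.card F + 1)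
    (hOarc : ∀ P₁ ∈ O, ∀ P₂ ∈ O, ∀ P₃ ∈ O, P₁ ≠ P₂ → P₁ ≠ P₃ → P₂ ≠ P₃ → ¬ P₃ ≤ P₁ ⊔ P₂)
    {W : Submodule F (Fin 4 → F)} (hW : T2Point O H W) :
    Nat.card {l : {l : Submodule F (Fin 4 → F) // T2Line O H l} // T2Inc W l.1} =
      Fintype.card F + 1 := by
  classical
  haveI := finite_submodule (F := F) (M := Fin 4 → F)
  rw [Nat.card_congr (Equiv.subtypeSubtypeEquivSubtypeInter (T2Line O H) (fun l => T2Inc W l))]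
  rcases hW with ⟨hW1, hWH⟩ | ⟨hW3, hWne, htan⟩ | rfl
  · rw [Nat.card_congr (Equiv.subtypeEquivRight (charLinesI hO hW1 hWH))]
    have key : ∀ Q : ↥O, (W ⊔ Q.1) ⊓ H = Q.1 := by
      rintro ⟨Q, hQ⟩
      have h2 : finrank F ↥(W ⊔ Q) = 2 := by
        rw [finrank_sup_rank1 hW1 (fun h => hWH (h.trans (hO Q hQ).2)), (hO Q hQ).1]
      exact (rank1_le_rank1 (hO Q hQ).1
        (finrank_inf_H hH3 (fun h => hWH (le_sup_left.trans h)) (k := 1) h2)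
        (le_inf le_sup_right (hO Q hQ).2)).symm
    have hrk : ∀ Q : ↥O, finrank F ↥(W ⊔ Q.1) = 2 := by
      rintro ⟨Q, hQ⟩
      rw [finrank_sup_rank1 hW1 (fun h => hWH (h.trans (hO Q hQ).2)), (hO Q hQ).1]
    rw [← hOcard]
    refine (Nat.card_congr (Equiv.ofBijective (fun Q : ↥O =>
      (⟨W ⊔ Q.1, hrk Q, le_sup_left, show (W ⊔ Q.1) ⊓ H ∈ O from by rw [key Q]; exact Q.2⟩ :
        {l : Submodule F (Fin 4 → F) // finrank F l = 2 ∧ W ≤ l ∧ l ⊓ H ∈ O})) ⟨?_, ?_⟩)).symm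
    · intro Q Q' hEq
      have h := congrArg (fun l : {l : Submodule F (Fin 4 → F) //
        finrank F l = 2 ∧ W ≤ l ∧ l ⊓ H ∈ O} => l.1 ⊓ H) hEq
      simp only at h
      rw [key Q, key Q'] at h
      exact Subtype.ext h
    · rintro ⟨l, hl2, hWl, hlO⟩
      refine ⟨⟨l ⊓ H, hlO⟩, Subtype.ext ?_⟩
      exact le_inf_rank_eq (hrk ⟨l ⊓ H, hlO⟩) hl2 (sup_le hWl inf_le_left)
  · obtain ⟨P, ⟨hPO, hPt⟩, -⟩ := htan.2.2
    rw [Nat.card_congr (Equiv.subtypeEquivRight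
      (charLinesII hH3 hO hW3 hWne rfl htan hPO hPt))]
    rw [card_or_disjoint _ _ (fun l h1 h2 => by
      rw [h2] at h1
      have := (hO P hPO).1
      omega)]
    rw [card_lines_in_plane_thru hH3 (hO P hPO).1 (hO P hPO).2 hW3
      (hPt.trans inf_le_left) rfl htan.1 hPt, card_eq_singleton]
  · rw [Nat.card_congr (Equiv.subtypeEquivRight (charLinesH hH3 hO))]
    exact hOcard

end parts2

section part5
variable {F : Type*} [Field F] [Fintype F] {H : Submodule F (Fin 4 → F)}
  {O : Set (Submodule F (Fin 4 → F))}

lemma line_eq_sup {X Y m : Submodule F (Fin 4 → F)} (hX1 : finrank F X = 1)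
    (hY1 : finrank F Y = 1) (hne : X ≠ Y) (hm : finrank F m = 2) (hXm : X ≤ m)
    (hYm : Y ≤ m) : m = X ⊔ Y := by
  have hXY : ¬ X ≤ Y := fun h => hne (rank1_le_rank1 hX1 hY1 h)
  have h2 : finrank F ↥(X ⊔ Y) = 2 := by rw [finrank_sup_rank1 hX1 hXY, hY1]
  exact (le_inf_rank_eq h2 hm (sup_le hXm hYm)).symm

lemma affine_join (hH3 : finrank F H = 3) (hO : ∀ P ∈ O, finrank F P = 1 ∧ P ≤ H)
    {W Q : Submodule F (Fin 4 → F)} (hW1 : finrank F W = 1) (hWH : ¬ W ≤ H) (hQO : Q ∈ O) :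
    finrank F ↥(W ⊔ Q) = 2 ∧ (W ⊔ Q) ⊓ H = Q ∧ ¬ (W ⊔ Q) ≤ H ∧ T2Line O H (W ⊔ Q) := by
  obtain ⟨hQ1, hQH⟩ := hO Q hQO
  have h2 : finrank F ↥(W ⊔ Q) = 2 := by
    rw [finrank_sup_rank1 hW1 (fun h => hWH (h.trans hQH)), hQ1]
  have hnH : ¬ (W ⊔ Q) ≤ H := fun h => hWH (le_sup_left.trans h)
  have htr : (W ⊔ Q) ⊓ H = Q :=
    (rank1_le_rank1 hQ1 (finrank_inf_H hH3 hnH (k := 1) h2)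
      (le_inf le_sup_right hQH)).symm
  exact ⟨h2, htr, hnH, Or.inl ⟨h2, hnH, show (W ⊔ Q) ⊓ H ∈ O from by rw [htr]; exact hQO⟩⟩

lemma rank4_eq_top {U : Submodule F (Fin 4 → F)} (h : finrank F U = 4) : U = ⊤ :=
  Submodule.eq_top_of_finrank_eq (by rw [h, finrank_V])

lemma line_plane_cross {l σ : Submodule F (Fin 4 → F)} (hl2 : finrank F l = 2)
    (hσ3 : finrank F σ = 3) (h : ¬ l ≤ σ) :
    l ⊔ σ = ⊤ ∧ finrank F ↥(l ⊓ σ) = 1 := by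
  have htop : l ⊔ σ = ⊤ := by
    by_cases h4 : finrank F ↥(l ⊔ σ) ≤ 3
    · exact absurd (le_sup_left.trans (Submodule.eq_of_le_of_finrank_le le_sup_right
        (by omega)).ge) h
    · exact rank4_eq_top (le_antisymm (finrank_le4 _) (by omega))
  refine ⟨htop, ?_⟩
  have hd := dimform l σ
  rw [htop, finrank_top, finrank_V, hl2, hσ3] at hd
  omega

/-- The solution predicate for the GQ axiom. -/
abbrev GQSol (O : Set (Submodule F (Fin 4 → F))) (H W l W' : Submodule F (Fin 4 → F)) : Prop :=
  T2Point O H W' ∧ (T2Inc W' l ∧ ∃ m, T2Line O H m ∧ T2Inc W m ∧ T2Inc W' m) ∧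
  ∀ W'', T2Point O H W'' → T2Inc W'' l →
    (∃ m, T2Line O H m ∧ T2Inc W m ∧ T2Inc W'' m) → W'' = W'

end part5

section part5b
variable {F : Type*} [Field F] [Fintype F] {H : Submodule F (Fin 4 → F)}
  {O : Set (Submodule F (Fin 4 → F))}

lemma case_ai (hH3 : finrank F H = 3) (hO : ∀ P ∈ O, finrank F P = 1 ∧ P ≤ H)
    (hOcard : Nat.card O = Fintype.card F + 1)
    (hOarc : ∀ P₁ ∈ O, ∀ P₂ ∈ O, ∀ P₃ ∈ O, P₁ ≠ P₂ → P₁ ≠ P₃ → P₂ ≠ P₃ → ¬ P₃ ≤ P₁ ⊔ P₂)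
    {l W : Submodule F (Fin 4 → F)} (hl2 : finrank F l = 2) (hlH : ¬ l ≤ H)
    (hlO : l ⊓ H ∈ O) (hW1 : finrank F W = 1) (hWH : ¬ W ≤ H) (hWl : ¬ W ≤ l) :
    ∃ W', GQSol O H W l W' := by
  obtain ⟨t, ⟨ht, hPt⟩, huniqt⟩ := tangent_exists_unique hH3 hO hOcard hOarc hlO
  obtain ⟨h3, hne, htr, hptW⟩ := lineA_plane hH3 hO hl2 hlH hlO ht hPt
  obtain ⟨hP1, hPH⟩ := hO _ hlO
  have hπ3 : finrank F ↥(W ⊔ l) = 3 := by rw [finrank_sup_rank1 hW1 hWl, hl2]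
  have hπH : ¬ (W ⊔ l) ≤ H := fun h => hlH (le_sup_right.trans h)
  have hn2 : finrank F ↥((W ⊔ l) ⊓ H) = 2 := finrank_inf_H hH3 hπH (k := 2) hπ3
  have hPn' : l ⊓ H ≤ (W ⊔ l) ⊓ H := le_inf (inf_le_left.trans le_sup_right) inf_le_right
  by_cases hcase : (W ⊔ l) ⊓ H = t
  · -- tangent case: W' = l ⊔ t
    have hπeq : W ⊔ l = l ⊔ t := by
      have hle : l ⊔ t ≤ W ⊔ l := sup_le le_sup_right (hcase ▸ inf_le_left)
      exact (le_inf_rank_eq h3 hπ3 hle).symm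
    refine ⟨l ⊔ t, hptW, ⟨Or.inr le_sup_left, ?_⟩, ?_⟩
    · obtain ⟨hm2, hmtr, hmH, hmline⟩ := affine_join hH3 hO hW1 hWH hlO
      refine ⟨W ⊔ (l ⊓ H), hmline, Or.inl le_sup_left, Or.inr ?_⟩
      have hWlt : W ≤ l ⊔ t := by rw [← hπeq]; exact le_sup_left
      exact sup_le hWlt (inf_le_left.trans le_sup_left)
    · rintro W'' hpW'' hincW'' ⟨m', hm'line, hm'W, hm'W''⟩
      rcases (charA hH3 hO hOcard hOarc hl2 hlH hlO ht hPt W'').1 ⟨hpW'', hincW''⟩ with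
        ⟨hW''1, hW''l, hW''H⟩ | heq
      · exfalso
        obtain ⟨hm'2, hWm', hm'O⟩ := (charLinesI hO hW1 hWH m').1 ⟨hm'line, hm'W⟩
        have hW''m' : W'' ≤ m' := by
          rcases hm'W'' with h | h
          · exact h
          · exact absurd h (not_le_rank hm'2 hW''1 (by omega))
        have hWW'' : W ≠ W'' := fun h => hWl (h ▸ hW''l)
        have hm'eq : m' = W ⊔ W'' := line_eq_sup hW1 hW''1 hWW'' hm'2 hWm' hW''m'
        have hm'π : m' ≤ W ⊔ l := by
          rw [hm'eq]
          exact sup_le le_sup_left (hW''l.trans le_sup_right)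
        have hRt : m' ⊓ H ≤ t := hcase ▸ inf_le_inf_right H hm'π
        have hRP : m' ⊓ H = l ⊓ H := tangent_point_eq ht hm'O hlO hRt hPt
        have hPm' : l ⊓ H ≤ m' := by rw [← hRP]; exact inf_le_left
        have hW''P : W'' ≠ l ⊓ H := fun h => hW''H (h ▸ hPH)
        have hleq : l = (l ⊓ H) ⊔ W'' :=
          line_eq_sup hP1 hW''1 (Ne.symm hW''P) hl2 inf_le_left hW''l
        have hm'l : m' = (l ⊓ H) ⊔ W'' :=
          line_eq_sup hP1 hW''1 (Ne.symm hW''P) hm'2 hPm' hW''m'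
        rw [hm'l, ← hleq] at hWm'
        exact hWl hWm'
      · exact heq
  · -- secant case
    obtain ⟨Q, hQO, hQn, hQP⟩ : ∃ Q, Q ∈ O ∧ Q ≤ (W ⊔ l) ⊓ H ∧ Q ≠ l ⊓ H := by
      by_contra hQex
      push_neg at hQex
      exact hcase (huniqt _ ⟨⟨hn2, inf_le_right, l ⊓ H, ⟨hlO, hPn'⟩,
        fun Q hQ => hQex Q hQ.1 hQ.2⟩, hPn'⟩)
    obtain ⟨hm2, hmtr, hmH, hmline⟩ := affine_join hH3 hO hW1 hWH hQO
    have hmπ : W ⊔ Q ≤ W ⊔ l := sup_le le_sup_left (hQn.trans inf_le_left)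
    have hsupml : (W ⊔ Q) ⊔ l = W ⊔ l :=
      le_antisymm (sup_le hmπ le_sup_right) (sup_le (le_sup_left.trans le_sup_left) le_sup_right)
    have hX1 : finrank F ↥((W ⊔ Q) ⊓ l) = 1 := by
      have hd := dimform (W ⊔ Q) l
      rw [hsupml, hπ3, hm2, hl2] at hd
      omega
    have hXl : (W ⊔ Q) ⊓ l ≤ l := inf_le_right
    have hXH : ¬ (W ⊔ Q) ⊓ l ≤ H := by
      intro h
      have h1 : (W ⊔ Q) ⊓ l = l ⊓ H := rank1_le_rank1 hX1 hP1 (le_inf hXl h)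
      have h2 : (W ⊔ Q) ⊓ l = Q := by
        refine rank1_le_rank1 hX1 (hO Q hQO).1 ?_
        have hh : (W ⊔ Q) ⊓ l ≤ (W ⊔ Q) ⊓ H := le_inf inf_le_left h
        rwa [hmtr] at hh
      exact hQP (by rw [← h2, h1])
    refine ⟨(W ⊔ Q) ⊓ l, Or.inl ⟨hX1, hXH⟩, ⟨Or.inl hXl, W ⊔ Q, hmline, Or.inl le_sup_left,
      Or.inl inf_le_left⟩, ?_⟩
    rintro W'' hpW'' hincW'' ⟨m', hm'line, hm'W, hm'W''⟩
    rcases (charA hH3 hO hOcard hOarc hl2 hlH hlO ht hPt W'').1 ⟨hpW'', hincW''⟩ with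
      ⟨hW''1, hW''l, hW''H⟩ | heq
    · obtain ⟨hm'2, hWm', hm'O⟩ := (charLinesI hO hW1 hWH m').1 ⟨hm'line, hm'W⟩
      have hW''m' : W'' ≤ m' := by
        rcases hm'W'' with h | h
        · exact h
        · exact absurd h (not_le_rank hm'2 hW''1 (by omega))
      have hWW'' : W ≠ W'' := fun h => hWl (h ▸ hW''l)
      have hm'eq : m' = W ⊔ W'' := line_eq_sup hW1 hW''1 hWW'' hm'2 hWm' hW''m'
      have hm'π : m' ≤ W ⊔ l := by
        rw [hm'eq]
        exact sup_le le_sup_left (hW''l.trans le_sup_right)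
      have hRn : m' ⊓ H ≤ (W ⊔ l) ⊓ H := inf_le_inf_right H hm'π
      have hRP : m' ⊓ H ≠ l ⊓ H := by
        intro h
        have hPm' : l ⊓ H ≤ m' := by rw [← h]; exact inf_le_left
        have hW''P : W'' ≠ l ⊓ H := fun h' => hW''H (h' ▸ hPH)
        have hleq : l = (l ⊓ H) ⊔ W'' :=
          line_eq_sup hP1 hW''1 (Ne.symm hW''P) hl2 inf_le_left hW''l
        have hm'l : m' = (l ⊓ H) ⊔ W'' :=
          line_eq_sup hP1 hW''1 (Ne.symm hW''P) hm'2 hPm' hW''m'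
        rw [hm'l, ← hleq] at hWm'
        exact hWl hWm'
      have hRQ : m' ⊓ H = Q := by
        by_contra hne'
        exact meets_le_two hO hOarc hn2 hlO hQO hm'O (Ne.symm hQP) (Ne.symm hRP)
          (fun h => hne' h.symm) hPn' hQn hRn
      have hQm' : Q ≤ m' := by rw [← hRQ]; exact inf_le_left
      have hm'm : m' = W ⊔ Q :=
        line_eq_sup hW1 (hO Q hQO).1 (fun h => hWH (h ▸ (hO Q hQO).2)) hm'2 hWm' hQm'
      refine rank1_le_rank1 hW''1 hX1 (le_inf ?_ hW''l)
      rw [← hm'm]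
      exact hW''m'
    · exfalso
      subst heq
      obtain ⟨hm'2, hWm', hm'O⟩ := (charLinesI hO hW1 hWH m').1 ⟨hm'line, hm'W⟩
      have hm'lt : m' ≤ l ⊔ t := by
        rcases hm'W'' with h | h
        · exact absurd h (not_le_rank h3 hm'2 (by omega))
        · exact h
      have hRt : m' ⊓ H ≤ t := by rw [← htr]; exact inf_le_inf_right H hm'lt
      have hRP : m' ⊓ H = l ⊓ H := tangent_point_eq ht hm'O hlO hRt hPt
      have hPm' : l ⊓ H ≤ m' := by rw [← hRP]; exact inf_le_left
      have hWP : W ≠ l ⊓ H := fun h => hWH (h ▸ hPH)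
      have hm'eq : m' = W ⊔ (l ⊓ H) := line_eq_sup hW1 hP1 hWP hm'2 hWm' hPm'
      have hWlt : W ≤ l ⊔ t := hWm'.trans hm'lt
      have hπeq : W ⊔ l = l ⊔ t := le_inf_rank_eq hπ3 h3 (sup_le hWlt le_sup_left)
      exact hcase (by rw [hπeq, htr])

end part5b

section part5c
variable {F : Type*} [Field F] [Fintype F] {H : Submodule F (Fin 4 → F)}
  {O : Set (Submodule F (Fin 4 → F))}

lemma case_aii (hH3 : finrank F H = 3) (hO : ∀ P ∈ O, finrank F P = 1 ∧ P ≤ H)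
    (hOcard : Nat.card O = Fintype.card F + 1)
    (hOarc : ∀ P₁ ∈ O, ∀ P₂ ∈ O, ∀ P₃ ∈ O, P₁ ≠ P₂ → P₁ ≠ P₃ → P₂ ≠ P₃ → ¬ P₃ ≤ P₁ ⊔ P₂)
    {l σ : Submodule F (Fin 4 → F)} (hl2 : finrank F l = 2) (hlH : ¬ l ≤ H)
    (hlO : l ⊓ H ∈ O) (hσ3 : finrank F σ = 3) (hσne : σ ≠ H)
    (htanσ : IsTangentLine O H (σ ⊓ H)) (hlσ : ¬ l ≤ σ) :
    ∃ W', GQSol O H σ l W' := by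
  obtain ⟨t, ⟨ht, hPt⟩, huniqt⟩ := tangent_exists_unique hH3 hO hOcard hOarc hlO
  obtain ⟨h3, hne, htr, hptW⟩ := lineA_plane hH3 hO hl2 hlH hlO ht hPt
  obtain ⟨hP1, hPH⟩ := hO _ hlO
  obtain ⟨Q, ⟨hQO, hQt⟩, -⟩ := htanσ.2.2
  obtain ⟨hQ1, hQH⟩ := hO Q hQO
  have hQσ : Q ≤ σ := hQt.trans inf_le_left
  obtain ⟨htop, hX1⟩ := line_plane_cross hl2 hσ3 hlσ
  have chII := charLinesII hH3 hO hσ3 hσne rfl htanσ hQO hQt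
  -- any affine point of l collinear with σ equals l ⊓ σ
  have hcommon : ∀ W'' : Submodule F (Fin 4 → F), finrank F W'' = 1 → W'' ≤ l → ¬ W'' ≤ H →
      ∀ m', T2Line O H m' → T2Inc σ m' → T2Inc W'' m' → W'' = l ⊓ σ := by
    intro W'' hW''1 hW''l hW''H m' hm'line hm'σ hm'W''
    rcases (chII m').1 ⟨hm'line, hm'σ⟩ with ⟨hm'2, hQm', hm'σ', hm'H⟩ | rfl
    · have hW''m' : W'' ≤ m' := by
        rcases hm'W'' with h | h
        · exact h
        · exact absurd h (not_le_rank hm'2 hW''1 (by omega))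
      exact rank1_le_rank1 hW''1 hX1 (le_inf hW''l (hW''m'.trans hm'σ'))
    · exfalso
      rcases hm'W'' with h | h
      · exact hW''H ((rank1_le_rank1 hW''1 hQ1 h) ▸ hQH)
      · exact hW''H ((rank1_le_rank1 hQ1 hW''1 h) ▸ hQH)
  by_cases hPQ : l ⊓ H = Q
  · -- P = Q : W' = l ⊔ t
    refine ⟨l ⊔ t, hptW, ⟨Or.inr le_sup_left, l ⊓ H, Or.inr hlO,
      Or.inr (by rw [hPQ]; exact hQσ), Or.inr (inf_le_left.trans le_sup_left)⟩, ?_⟩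
    rintro W'' hpW'' hincW'' ⟨m', hm'line, hm'W, hm'W''⟩
    rcases (charA hH3 hO hOcard hOarc hl2 hlH hlO ht hPt W'').1 ⟨hpW'', hincW''⟩ with
      ⟨hW''1, hW''l, hW''H⟩ | heq
    · exfalso
      have hXP : l ⊓ σ = l ⊓ H := by
        refine (rank1_le_rank1 hP1 hX1 (le_inf inf_le_left ?_)).symm
        rw [hPQ]
        exact hQσ
      have := hcommon W'' hW''1 hW''l hW''H m' hm'line hm'W hm'W''
      rw [this, hXP] at hW''H
      exact hW''H hPH
    · exact heq
  · -- P ≠ Q : W' = l ⊓ σ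
    have hXH : ¬ l ⊓ σ ≤ H := by
      intro h
      have h1 : l ⊓ σ = l ⊓ H := rank1_le_rank1 hX1 hP1 (le_inf inf_le_left h)
      have h2 : l ⊓ H ≤ σ ⊓ H := le_inf (h1 ▸ inf_le_right) inf_le_right
      exact hPQ (tangent_point_eq htanσ hlO hQO h2 hQt)
    obtain ⟨hj2, hjtr, hjH, hjline⟩ := affine_join hH3 hO hX1 hXH hQO
    refine ⟨l ⊓ σ, Or.inl ⟨hX1, hXH⟩, ⟨Or.inl inf_le_left, (l ⊓ σ) ⊔ Q, hjline,
      Or.inr (sup_le inf_le_right hQσ), Or.inl le_sup_left⟩, ?_⟩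
    rintro W'' hpW'' hincW'' ⟨m', hm'line, hm'W, hm'W''⟩
    rcases (charA hH3 hO hOcard hOarc hl2 hlH hlO ht hPt W'').1 ⟨hpW'', hincW''⟩ with
      ⟨hW''1, hW''l, hW''H⟩ | heq
    · exact hcommon W'' hW''1 hW''l hW''H m' hm'line hm'W hm'W''
    · exfalso
      subst heq
      have hQlt : Q ≤ l ⊔ t := by
        rcases (chII m').1 ⟨hm'line, hm'W⟩ with ⟨hm'2, hQm', hm'σ', hm'H⟩ | rfl
        · have hm'lt : m' ≤ l ⊔ t := by
            rcases hm'W'' with h | h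
            · exact absurd h (not_le_rank h3 hm'2 (by omega))
            · exact h
          exact hQm'.trans hm'lt
        · rcases hm'W'' with h | h
          · exact absurd h (not_le_rank h3 hQ1 (by omega))
          · exact h
      have hQt' : Q ≤ t := by
        have := le_inf hQlt hQH
        rwa [htr] at this
      exact hPQ (tangent_point_eq ht hQO hlO hQt' hPt).symm
  
end part5c

section part5d
variable {F : Type*} [Field F] [Fintype F] {H : Submodule F (Fin 4 → F)}
  {O : Set (Submodule F (Fin 4 → F))}

lemma case_aiii (hH3 : finrank F H = 3) (hO : ∀ P ∈ O, finrank F P = 1 ∧ P ≤ H)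
    (hOcard : Nat.card O = Fintype.card F + 1)
    (hOarc : ∀ P₁ ∈ O, ∀ P₂ ∈ O, ∀ P₃ ∈ O, P₁ ≠ P₂ → P₁ ≠ P₃ → P₂ ≠ P₃ → ¬ P₃ ≤ P₁ ⊔ P₂)
    {l : Submodule F (Fin 4 → F)} (hl2 : finrank F l = 2) (hlH : ¬ l ≤ H)
    (hlO : l ⊓ H ∈ O) : ∃ W', GQSol O H H l W' := by
  obtain ⟨t, ⟨ht, hPt⟩, huniqt⟩ := tangent_exists_unique hH3 hO hOcard hOarc hlO
  obtain ⟨h3, hne, htr, hptW⟩ := lineA_plane hH3 hO hl2 hlH hlO ht hPt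
  refine ⟨l ⊔ t, hptW, ⟨Or.inr le_sup_left, l ⊓ H, Or.inr hlO, Or.inr (hO _ hlO).2,
    Or.inr (inf_le_left.trans le_sup_left)⟩, ?_⟩
  rintro W'' hpW'' hincW'' ⟨m', hm'line, hm'W, hm'W''⟩
  rcases (charA hH3 hO hOcard hOarc hl2 hlH hlO ht hPt W'').1 ⟨hpW'', hincW''⟩ with
    ⟨hW''1, hW''l, hW''H⟩ | heq
  · exfalso
    have hm'O : m' ∈ O := (charLinesH hH3 hO m').1 ⟨hm'line, hm'W⟩
    obtain ⟨hm'1, hm'H⟩ := hO m' hm'O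
    rcases hm'W'' with h | h
    · exact hW''H ((rank1_le_rank1 hW''1 hm'1 h) ▸ hm'H)
    · exact hW''H ((rank1_le_rank1 hm'1 hW''1 h) ▸ hm'H)
  · exact heq

lemma case_bi (hH3 : finrank F H = 3) (hO : ∀ P ∈ O, finrank F P = 1 ∧ P ≤ H)
    (hOcard : Nat.card O = Fintype.card F + 1)
    (hOarc : ∀ P₁ ∈ O, ∀ P₂ ∈ O, ∀ P₃ ∈ O, P₁ ≠ P₂ → P₁ ≠ P₃ → P₂ ≠ P₃ → ¬ P₃ ≤ P₁ ⊔ P₂)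
    {P W : Submodule F (Fin 4 → F)} (hPO : P ∈ O) (hW1 : finrank F W = 1)
    (hWH : ¬ W ≤ H) : ∃ W', GQSol O H W P W' := by
  obtain ⟨t, ⟨ht, hPt⟩, huniqt⟩ := tangent_exists_unique hH3 hO hOcard hOarc hPO
  obtain ⟨hP1, hPH⟩ := hO P hPO
  have hbot : W ⊓ t = ⊥ := rank1_inf_eq_bot hW1 (fun h => hWH (h.trans ht.2.1))
  have h3 : finrank F ↥(W ⊔ t) = 3 := by
    have hd := dimform W t
    rw [hbot, finrank_bot, hW1, ht.1] at hd
    omega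
  have hne : W ⊔ t ≠ H := fun h => hWH (le_sup_left.trans h.le)
  have htrW : (W ⊔ t) ⊓ H = t := plane_trace hH3 h3 hne ht.1 ht.2.1 le_sup_right
  obtain ⟨hj2, hjtr, hjH, hjline⟩ := affine_join hH3 hO hW1 hWH hPO
  refine ⟨W ⊔ t, Or.inr (Or.inl ⟨h3, hne, by rw [htrW]; exact ht⟩),
    ⟨Or.inr (hPt.trans le_sup_right), W ⊔ P, hjline, Or.inl le_sup_left,
      Or.inr (sup_le le_sup_left (hPt.trans le_sup_right))⟩, ?_⟩
  rintro W'' hpW'' hincW'' ⟨m', hm'line, hm'W, hm'W''⟩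
  rcases (charB hH3 hO hOcard hOarc hPO ht hPt W'').1 ⟨hpW'', hincW''⟩ with
    ⟨hW''3, htW'', hW''ne⟩ | heq
  · obtain ⟨hm'2, hWm', hm'O⟩ := (charLinesI hO hW1 hWH m').1 ⟨hm'line, hm'W⟩
    have hm'W''le : m' ≤ W'' := by
      rcases hm'W'' with h | h
      · exact absurd h (not_le_rank hW''3 hm'2 (by omega))
      · exact h
    have htrW'' : W'' ⊓ H = t := plane_trace hH3 hW''3 hW''ne ht.1 ht.2.1 htW''
    have hRt : m' ⊓ H ≤ t := by
      rw [← htrW'']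
      exact inf_le_inf_right H hm'W''le
    have hRP : m' ⊓ H = P := tangent_point_eq ht hm'O hPO hRt hPt
    have hPm' : P ≤ m' := by rw [← hRP]; exact inf_le_left
    have hle : W ⊔ t ≤ W'' := sup_le (hWm'.trans hm'W''le) htW''
    exact (le_inf_rank_eq h3 hW''3 hle).symm
  · exfalso
    subst heq
    have hm'O : m' ∈ O := (charLinesH hH3 hO m').1 ⟨hm'line, hm'W''⟩
    obtain ⟨hm'1, hm'H⟩ := hO m' hm'O
    rcases hm'W with h | h
    · exact hWH ((rank1_le_rank1 hW1 hm'1 h) ▸ hm'H)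
    · exact hWH ((rank1_le_rank1 hm'1 hW1 h) ▸ hm'H)

lemma case_bii (hH3 : finrank F H = 3) (hO : ∀ P ∈ O, finrank F P = 1 ∧ P ≤ H)
    (hOcard : Nat.card O = Fintype.card F + 1)
    (hOarc : ∀ P₁ ∈ O, ∀ P₂ ∈ O, ∀ P₃ ∈ O, P₁ ≠ P₂ → P₁ ≠ P₃ → P₂ ≠ P₃ → ¬ P₃ ≤ P₁ ⊔ P₂)
    {P σ : Submodule F (Fin 4 → F)} (hPO : P ∈ O) (hσ3 : finrank F σ = 3) (hσne : σ ≠ H)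
    (htanσ : IsTangentLine O H (σ ⊓ H)) (hPσ : ¬ P ≤ σ) : ∃ W', GQSol O H σ P W' := by
  obtain ⟨t, ⟨ht, hPt⟩, huniqt⟩ := tangent_exists_unique hH3 hO hOcard hOarc hPO
  obtain ⟨hP1, hPH⟩ := hO P hPO
  obtain ⟨Q, ⟨hQO, hQt⟩, -⟩ := htanσ.2.2
  obtain ⟨hQ1, hQH⟩ := hO Q hQO
  have hQσ : Q ≤ σ := hQt.trans inf_le_left
  have hPQ : P ≠ Q := fun h => hPσ (h ▸ hQσ)
  have chII := charLinesII hH3 hO hσ3 hσne rfl htanσ hQO hQt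
  refine ⟨H, Or.inr (Or.inr rfl), ⟨Or.inr hPH, Q, Or.inr hQO, Or.inr hQσ, Or.inr hQH⟩, ?_⟩
  rintro W'' hpW'' hincW'' ⟨m', hm'line, hm'W, hm'W''⟩
  rcases (charB hH3 hO hOcard hOarc hPO ht hPt W'').1 ⟨hpW'', hincW''⟩ with
    ⟨hW''3, htW'', hW''ne⟩ | heq
  · exfalso
    have hQW'' : Q ≤ W'' := by
      rcases (chII m').1 ⟨hm'line, hm'W⟩ with ⟨hm'2, hQm', hm'σ, hm'H⟩ | rfl
      · have hm'le : m' ≤ W'' := by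
          rcases hm'W'' with h | h
          · exact absurd h (not_le_rank hW''3 hm'2 (by omega))
          · exact h
        exact hQm'.trans hm'le
      · rcases hm'W'' with h | h
        · exact absurd h (not_le_rank hW''3 hQ1 (by omega))
        · exact h
    have htrW'' : W'' ⊓ H = t := plane_trace hH3 hW''3 hW''ne ht.1 ht.2.1 htW''
    have hQt' : Q ≤ t := by
      rw [← htrW'']
      exact le_inf hQW'' hQH
    exact hPQ (tangent_point_eq ht hQO hPO hQt' hPt).symm
  · exact heq

end part5d

section final
variable {F : Type*} [Field F] [Fintype F] {H : Submodule F (Fin 4 → F)}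
  {O : Set (Submodule F (Fin 4 → F))}

lemma part5 (hH3 : finrank F H = 3) (hO : ∀ P ∈ O, finrank F P = 1 ∧ P ≤ H)
    (hOcard : Nat.card O = Fintype.card F + 1)
    (hOarc : ∀ P₁ ∈ O, ∀ P₂ ∈ O, ∀ P₃ ∈ O, P₁ ≠ P₂ → P₁ ≠ P₃ → P₂ ≠ P₃ → ¬ P₃ ≤ P₁ ⊔ P₂)
    {W l : Submodule F (Fin 4 → F)} (hW : T2Point O H W) (hl : T2Line O H l)
    (hnInc : ¬ T2Inc W l) : ∃ W', GQSol O H W l W' := by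
  rcases hl with ⟨hl2, hlH, hlO⟩ | hlO
  · rcases hW with ⟨hW1, hWH⟩ | ⟨hW3, hWne, htan⟩ | rfl
    · exact case_ai hH3 hO hOcard hOarc hl2 hlH hlO hW1 hWH (fun h => hnInc (Or.inl h))
    · exact case_aii hH3 hO hOcard hOarc hl2 hlH hlO hW3 hWne htan
        (fun h => hnInc (Or.inr h))
    · exact case_aiii hH3 hO hOcard hOarc hl2 hlH hlO
  · rcases hW with ⟨hW1, hWH⟩ | ⟨hW3, hWne, htan⟩ | rfl
    · exact case_bi hH3 hO hOcard hOarc hlO hW1 hWH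
    · exact case_bii hH3 hO hOcard hOarc hlO hW3 hWne htan (fun h => hnInc (Or.inr h))
    · exact absurd (Or.inr (hO l hlO).2) hnInc

end final

/-- The generalised quadrangle T_2(O) of Tits, constructed from a conic O in
a hyperplane PG(2,q) of PG(3,q), is a generalised quadrangle of order (q,q): it has
(q+1)(q^2+1) points and (q+1)(q^2+1) lines, each line has q+1 points, each point is on q+1
lines, and for every point P not on a line l there is a unique point of l collinear
with P. -/
theorem stmt_15 (F : Type*) [Field F] [Fintype F] (q : ℕ) (hq : Fintype.card F = q)
    (H : Submodule F (Fin 4 → F))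
    (hH : H = LinearMap.ker (LinearMap.proj (3 : Fin 4) : (Fin 4 → F) →ₗ[F] F))
    (O : Set (Submodule F (Fin 4 → F)))
    (hO : ∀ P ∈ O, Module.finrank F P = 1 ∧ P ≤ H)
    (hOcard : Nat.card O = q + 1)
    (hOarc : ∀ P₁ ∈ O, ∀ P₂ ∈ O, ∀ P₃ ∈ O,
      P₁ ≠ P₂ → P₁ ≠ P₃ → P₂ ≠ P₃ → ¬ P₃ ≤ P₁ ⊔ P₂)
    (hconic : ∃ Φ : QuadraticForm F (Fin 4 → F), ∀ P : Submodule F (Fin 4 → F),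
      P ∈ O ↔ (Module.finrank F P = 1 ∧ P ≤ H ∧ ∀ v ∈ P, Φ v = 0)) :
    Nat.card {W : Submodule F (Fin 4 → F) // T2Point O H W} = (q + 1) * (q ^ 2 + 1) ∧
    Nat.card {l : Submodule F (Fin 4 → F) // T2Line O H l} = (q + 1) * (q ^ 2 + 1) ∧
    (∀ l : {l : Submodule F (Fin 4 → F) // T2Line O H l},
      Nat.card {W : {W : Submodule F (Fin 4 → F) // T2Point O H W} //
        T2Inc W.1 l.1} = q + 1) ∧
    (∀ W : {W : Submodule F (Fin 4 → F) // T2Point O H W},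
      Nat.card {l : {l : Submodule F (Fin 4 → F) // T2Line O H l} //
        T2Inc W.1 l.1} = q + 1) ∧
    (∀ (W : {W : Submodule F (Fin 4 → F) // T2Point O H W})
        (l : {l : Submodule F (Fin 4 → F) // T2Line O H l}),
      ¬ T2Inc W.1 l.1 →
      ∃! W' : {W' : Submodule F (Fin 4 → F) // T2Point O H W'},
        T2Inc W'.1 l.1 ∧ ∃ m : {m : Submodule F (Fin 4 → F) // T2Line O H m},
          T2Inc W.1 m.1 ∧ T2Inc W'.1 m.1) := by
  subst hq
  have hH3 : Module.finrank F H = 3 := by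
    have hr := LinearMap.finrank_range_add_finrank_ker
      (LinearMap.proj (3 : Fin 4) : (Fin 4 → F) →ₗ[F] F)
    have hsurj : LinearMap.range (LinearMap.proj (3 : Fin 4) : (Fin 4 → F) →ₗ[F] F) = ⊤ := by
      rw [LinearMap.range_eq_top]
      intro c
      exact ⟨fun _ => c, rfl⟩
    rw [hsurj, finrank_top, finrank_V, Module.finrank_self] at hr
    rw [hH]
    omega
  refine ⟨part1 hH3 hO hOcard hOarc, part2 hH3 hO hOcard,
    fun l => part3 hH3 hO hOcard hOarc l.2, fun W => part4 hH3 hO hOcard hOarc W.2, ?_⟩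
  intro W l hnInc
  obtain ⟨W', hpt, ⟨hinc, m, hml, hmW, hmW'⟩, huniq⟩ :=
    part5 hH3 hO hOcard hOarc W.2 l.2 hnInc
  refine ⟨⟨W', hpt⟩, ⟨hinc, ⟨⟨m, hml⟩, hmW, hmW'⟩⟩, ?_⟩
  rintro ⟨W'', hpt''⟩ ⟨hinc'', ⟨⟨m', hm'line⟩, hm'W, hm'W''⟩⟩
  exact Subtype.ext (huniq W'' hpt'' hinc'' ⟨m', hm'line, hm'W, hm'W''⟩)
end
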